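/- arXiv:2302.04624 — 5 statements merged into one kernel-verified Lean document; each statement's English description precedes it below -/
import Mathlib

section
/- For all positive integers α and k, the graph G^{α+1}_k has tree-cut width at most α+1. -/
open SimpleGraph

universe u

/-- A tree-cut decomposition of a graph `G`: a finite tree `T` together with
pairwise disjoint (possibly empty) bags covering the vertex set of `G`. -/
structure TreeCutDecomp {V : Type u} (G : SimpleGraph V) where
  β : Type
  fintypeβ : Fintype β
  T : SimpleGraph β
  isTree : T.IsTree
  bag : β → Set V
  disj : Pairwise fun s t => Disjoint (bag s) (bag t)
  covers : ∀ v : V, ∃ t, v ∈ bag t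

namespace TreeCutDecomp

variable {V : Type u} {G : SimpleGraph V}

/-- The edge `e` of `G` crosses the bag at node `t`: its endpoints lie in bag-unions of
two distinct components of `T - t`. -/
def Crosses (D : TreeCutDecomp G) (t : D.β) (e : Sym2 V) : Prop :=
  e ∈ G.edgeSet ∧ ∃ (u v : V) (s₁ s₂ : D.β) (h₁ : s₁ ≠ t) (h₂ : s₂ ≠ t),
    e = s(u, v) ∧ u ∈ D.bag s₁ ∧ v ∈ D.bag s₂ ∧
    ¬ (D.T.induce {x | x ≠ t}).Reachable ⟨s₁, h₁⟩ ⟨s₂, h₂⟩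

/-- The number of edges crossing the bag at node `t`. -/
noncomputable def crossNum (D : TreeCutDecomp G) (t : D.β) : ℕ :=
  {e : Sym2 V | D.Crosses t e}.ncard

/-- The crossing number of the decomposition is at most `k`. -/
def CrossLE (D : TreeCutDecomp G) (k : ℕ) : Prop := ∀ t, D.crossNum t ≤ k

/-- The thickness (maximum bag size) of the decomposition is at most `a`. -/
def ThickLE (D : TreeCutDecomp G) (a : ℕ) : Prop := ∀ t, (D.bag t).ncard ≤ a

end TreeCutDecomp

/-- The `α`-edge-crossing width: minimum crossing number over tree-cut decompositions
of thickness at most `α`. -/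
noncomputable def ecrwA {V : Type u} (G : SimpleGraph V) (a : ℕ) : ℕ :=
  sInf {k | ∃ D : TreeCutDecomp G, D.ThickLE a ∧ D.CrossLE k}

/-- The edge-crossing width: minimum over tree-cut decompositions of the maximum of the
thickness and the crossing number. -/
noncomputable def ecrw {V : Type u} (G : SimpleGraph V) : ℕ :=
  sInf {k | ∃ D : TreeCutDecomp G, D.ThickLE k ∧ D.CrossLE k}

/-- The bipartite graph `G^n_k`: one side is `A = Fin n`, the other side consists of
pairs `(W, ℓ)` with `W` a 2-element subset of `A` and `ℓ ∈ [k]`; `a` is adjacent to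
`(W, ℓ)` iff `a ∈ W`. -/
def Gnk (n k : ℕ) : SimpleGraph (Fin n ⊕ ({W : Finset (Fin n) // W.card = 2} × Fin k)) :=
  SimpleGraph.fromRel fun x y =>
    match x, y with
    | Sum.inl a, Sum.inr (W, _) => a ∈ W.1
    | _, _ => False

open Classical

namespace TreeCutDecomp

variable {V : Type u} {G : SimpleGraph V}

/-- The union of the bags over the component of `T`-minus-the-edge-`xy` containing `x`. -/
def sideSet (D : TreeCutDecomp G) (x y : D.β) : Set V :=
  {v | ∃ s, v ∈ D.bag s ∧ (D.T.deleteEdges {s(x, y)}).Reachable s x}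

/-- The adhesion of the tree edge `xy`: the set of edges of `G` crossing the
bipartition of `V(G)` induced by deleting `xy` from `T`. -/
def adhesion (D : TreeCutDecomp G) (x y : D.β) : Set (Sym2 V) :=
  {e | e ∈ G.edgeSet ∧ ∃ u w, e = s(u, w) ∧ u ∈ D.sideSet x y ∧ w ∈ D.sideSet y x}

/-- The node of the decomposition whose bag contains `v`. -/
noncomputable def bagOf (D : TreeCutDecomp G) (v : V) : D.β := (D.covers v).choose

end TreeCutDecomp

/-- Choose some element satisfying `P`, if one exists. -/
noncomputable def pick {β : Type*} [Nonempty β] (P : β → Prop) : β :=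
  if h : ∃ s, P s then h.choose else Classical.arbitrary β

/-- In a multigraph with edge multiset `E` (over vertex type `ω`), the multiset of
edge-ends at `v` (i.e. the opposite endpoints of the edges incident with `v`,
with multiplicity; a loop at `v` contributes `v` twice). Its cardinality is the
degree of `v`. -/
noncomputable def otherEnds {ω : Type*} (v : ω) (E : Multiset (Sym2 ω)) : Multiset ω :=
  E.bind fun e =>
    Sym2.lift ⟨fun a b => (if a = v then ({b} : Multiset ω) else 0) +
      (if b = v then ({a} : Multiset ω) else 0), fun a b => by simp [add_comm]⟩ e

/-- One suppression step in a multigraph `(S, E)`: remove a vertex `v ∉ X` of degree at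
most 2; if the degree is exactly 2, add an edge between the two opposite endpoints. -/
def SuppStep {ω : Type*} (X : Finset ω) :
    Finset ω × Multiset (Sym2 ω) → Finset ω × Multiset (Sym2 ω) → Prop :=
  fun P Q => ∃ v ∈ P.1, v ∉ X ∧ Q.1 = P.1.erase v ∧
    ((Multiset.card (otherEnds v P.2) ≤ 1 ∧ Q.2 = P.2.filter fun e => ¬ v ∈ e) ∨
     (∃ a b, otherEnds v P.2 = {a, b} ∧
        Q.2 = (P.2.filter fun e => ¬ v ∈ e) + {s(a, b)}))

/-- A multigraph is terminal (for suppression outside `X`) if every vertex outside `X`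
has degree at least 3. -/
def SuppTerminal {ω : Type*} (X : Finset ω) : Finset ω × Multiset (Sym2 ω) → Prop :=
  fun P => ∀ v ∈ P.1, v ∉ X → 3 ≤ Multiset.card (otherEnds v P.2)

namespace TreeCutDecomp

variable {V : Type u} [Fintype V] {G : SimpleGraph V}

/-- The projection used to form the torso at `t`: a vertex of the bag `X_t` maps to
itself, and any other vertex maps to the consolidated vertex `z_i` of its component of
`T - t`, represented by the neighbour `s` of `t` lying in that component. -/
noncomputable def torsoProj (D : TreeCutDecomp G) (t : D.β) (v : V) : V ⊕ D.β :=
  letI : Nonempty D.β := D.isTree.isConnected.nonempty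
  if v ∈ D.bag t then Sum.inl v
  else Sum.inr (pick fun s => D.T.Adj t s ∧ ∃ (h₁ : D.bagOf v ≠ t) (h₂ : s ≠ t),
    (D.T.induce {x | x ≠ t}).Reachable ⟨D.bagOf v, h₁⟩ ⟨s, h₂⟩)

/-- The vertex set of the torso at `t`: the bag `X_t` together with one consolidated
vertex for each component of `T - t` (represented by the neighbours of `t`). -/
noncomputable def torsoVerts (D : TreeCutDecomp G) (t : D.β) : Finset (V ⊕ D.β) :=
  letI := D.fintypeβ
  (Set.toFinite {x : V ⊕ D.β |
    (∃ v ∈ D.bag t, x = Sum.inl v) ∨ ∃ s, D.T.Adj t s ∧ x = Sum.inr s}).toFinset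

/-- The edge multiset of the torso at `t`: each edge of `G` is mapped by the
consolidation projection, and the edges falling inside a single consolidated part
(loops) are discarded. -/
noncomputable def torsoEdges (D : TreeCutDecomp G) (t : D.β) : Multiset (Sym2 (V ⊕ D.β)) :=
  ((Set.toFinite G.edgeSet).toFinset.val.map (Sym2.map (D.torsoProj t))).filter
    fun e => ¬ e.IsDiag

/-- The tree-cut width of the decomposition `D` is at most `m`: all adhesions have size
at most `m`, and for each node `t`, exhaustive suppression of the degree-≤2 vertices of
the torso outside `X_t` (the 3-center) yields a multigraph with at most `m` vertices. -/
def TcwLE (D : TreeCutDecomp G) (m : ℕ) : Prop :=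
  (∀ x y : D.β, D.T.Adj x y → (D.adhesion x y).ncard ≤ m) ∧
  ∀ t : D.β, ∃ P : Finset (V ⊕ D.β) × Multiset (Sym2 (V ⊕ D.β)),
    Relation.ReflTransGen (SuppStep ((Set.toFinite (Sum.inl '' D.bag t)).toFinset))
      (D.torsoVerts t, D.torsoEdges t) P ∧
    SuppTerminal ((Set.toFinite (Sum.inl '' D.bag t)).toFinset) P ∧ P.1.card ≤ m

end TreeCutDecomp

/-- The tree-cut width of `G` (Wollan): the minimum width over all tree-cut
decompositions. -/
noncomputable def tcw {V : Type u} [Fintype V] (G : SimpleGraph V) : ℕ :=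
  sInf {m | ∃ D : TreeCutDecomp G, D.TcwLE m}


/-! ### Auxiliary development for `stmt_11` -/

section Stmt11Aux

open Finset Multiset

/-- Opposite side of the bipartite graph. -/
abbrev SB (n k : ℕ) := {W : Finset (Fin n) // W.card = 2} × Fin k

/-- The star tree used in the decomposition: centre `none`, leaves `some b`. -/
def starT (n k : ℕ) : SimpleGraph (Option (SB n k)) where
  Adj x y := x ≠ y ∧ (x = none ∨ y = none)
  symm := ⟨fun _ _ h => ⟨h.1.symm, h.2.symm⟩⟩
  loopless := ⟨fun _ h => h.1 rfl⟩

variable {n k : ℕ}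

lemma reach_eq_isolated {γ : Type*} {H : SimpleGraph γ} {v w : γ} (h : ∀ x, ¬ H.Adj w x)
    (hr : H.Reachable v w) : v = w := by
  obtain ⟨p⟩ := hr.symm
  cases p with
  | nil => rfl
  | cons a _ => exact absurd a (h _)

lemma star_isolated (b : SB n k) :
    ∀ y, ¬ ((starT n k).deleteEdges {s(none, some b)}).Adj (some b) y := by
  intro y hy
  rw [SimpleGraph.deleteEdges_adj] at hy
  obtain ⟨⟨hne, hor⟩, hmem⟩ := hy
  rcases hor with h | h
  · simp at h
  · subst h
    exact hmem (by rw [Sym2.eq_swap]; rfl)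

lemma starT_isTree : (starT n k).IsTree := by
  constructor
  · have key : ∀ u : Option (SB n k), (starT n k).Reachable u none := by
      intro u
      cases u with
      | none => exact SimpleGraph.Reachable.refl _
      | some b => exact SimpleGraph.Adj.reachable ⟨by simp, Or.inr rfl⟩
    haveI : Nonempty (Option (SB n k)) := ⟨none⟩
    exact SimpleGraph.Connected.mk (fun u v => (key u).trans (key v).symm)
  · rw [SimpleGraph.isAcyclic_iff_forall_adj_isBridge]
    intro v w hvw
    rw [SimpleGraph.isBridge_iff]
    intro hr
    obtain ⟨hne, hor⟩ := hvw
    rcases hor with rfl | rfl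
    · cases w with
      | none => exact hne rfl
      | some b =>
          have := reach_eq_isolated (star_isolated b) hr
          simp at this
    · cases v with
      | none => exact hne rfl
      | some b =>
          rw [Sym2.eq_swap] at hr
          have := reach_eq_isolated (star_isolated b) hr.symm
          simp at this

/-- The star tree-cut decomposition of `Gnk n k`. -/
@[reducible]
noncomputable def starD (n k : ℕ) : TreeCutDecomp (Gnk n k) where
  β := Option (SB n k)
  fintypeβ := inferInstance
  T := starT n k
  isTree := starT_isTree
  bag := fun t => match t with
    | none => Set.range Sum.inl
    | some b => {Sum.inr b}
  disj := by
    rintro (_ | b) (_ | b') hst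
    · exact absurd rfl hst
    · rw [Set.disjoint_left]
      rintro x ⟨a, rfl⟩ hx
      simp at hx
    · rw [Set.disjoint_left]
      rintro x hx ⟨a, rfl⟩
      simp at hx
    · rw [Set.disjoint_left]
      rintro x hx hx'
      simp only [Set.mem_singleton_iff] at hx hx'
      subst hx
      cases hx'
      exact hst rfl
  covers := by
    rintro (a | b)
    · exact ⟨none, ⟨a, rfl⟩⟩
    · exact ⟨some b, rfl⟩

lemma bagOf_spec (D : TreeCutDecomp (Gnk n k)) (v) : v ∈ D.bag (D.bagOf v) :=
  (D.covers v).choose_spec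

lemma starD_bag_none : (starD n k).bag none = Set.range Sum.inl := rfl

lemma starD_bag_some (b : SB n k) : (starD n k).bag (some b) = {Sum.inr b} := rfl

lemma starD_bagOf_inr (b : SB n k) : (starD n k).bagOf (Sum.inr b) = some b := by
  have h := bagOf_spec (starD n k) (Sum.inr b)
  rcases hc : (starD n k).bagOf (Sum.inr b) with _ | b'
  · rw [hc, starD_bag_none] at h
    obtain ⟨a, ha⟩ := h
    cases ha
  · rw [hc, starD_bag_some, Set.mem_singleton_iff] at h
    cases h
    rfl

lemma reachable_of_eq {γ : Type*} {H : SimpleGraph γ} {a b : γ} (h : a = b) :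
    H.Reachable a b := h ▸ SimpleGraph.Reachable.refl a

lemma pick_spec {β : Type*} [Nonempty β] {P : β → Prop} (h : ∃ s, P s) : P (pick P) := by
  rw [pick, dif_pos h]
  exact h.choose_spec

/-- The consolidated-vertex map at the centre. -/
lemma proj_none_inl (a : Fin n) :
    (starD n k).torsoProj none (Sum.inl a) = Sum.inl (Sum.inl a) := by
  have hmem : (Sum.inl a : Fin n ⊕ SB n k) ∈ (starD n k).bag none := ⟨a, rfl⟩
  simp only [TreeCutDecomp.torsoProj, if_pos hmem]

lemma proj_none_inr (b : SB n k) :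
    (starD n k).torsoProj none (Sum.inr b) = Sum.inr (some b) := by
  classical
  have hmem : (Sum.inr b : Fin n ⊕ SB n k) ∉ (starD n k).bag none := by
    rw [starD_bag_none]
    rintro ⟨a, ha⟩
    cases ha
  simp only [TreeCutDecomp.torsoProj, if_neg hmem]
  congr 1
  set P : Option (SB n k) → Prop := fun s => (starD n k).T.Adj none s ∧
      ∃ (h₁ : (starD n k).bagOf (Sum.inr b) ≠ none) (h₂ : s ≠ none),
        ((starD n k).T.induce {x | x ≠ none}).Reachable ⟨(starD n k).bagOf (Sum.inr b), h₁⟩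
          ⟨s, h₂⟩ with hPdef
  have hb1 : (starD n k).bagOf (Sum.inr b) ≠ none := by rw [starD_bagOf_inr]; simp
  have hP : P (some b) := by
    refine ⟨⟨by simp, Or.inl rfl⟩, hb1, by simp, ?_⟩
    exact reachable_of_eq (Subtype.ext (starD_bagOf_inr b))
  have hp := pick_spec ⟨some b, hP⟩
  obtain ⟨hadj, h₁, h₂, hre⟩ := hp
  have hiso : ∀ x : {x : Option (SB n k) // x ≠ none},
      ¬ ((starD n k).T.induce {x | x ≠ none}).Adj ⟨pick P, h₂⟩ x := by
    rintro ⟨x, hx⟩ hadj'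
    obtain ⟨_, hor⟩ := hadj'
    rcases hor with h | h
    · exact h₂ h
    · exact hx h
  have hsub := reach_eq_isolated hiso hre
  have hval : (starD n k).bagOf (Sum.inr b) = pick P := congrArg Subtype.val hsub
  rw [starD_bagOf_inr] at hval
  exact hval.symm

/-- The consolidated-vertex map at a leaf. -/
lemma proj_some_self (b : SB n k) :
    (starD n k).torsoProj (some b) (Sum.inr b) = Sum.inl (Sum.inr b) := by
  have hmem : (Sum.inr b : Fin n ⊕ SB n k) ∈ (starD n k).bag (some b) := rfl
  simp only [TreeCutDecomp.torsoProj, if_pos hmem]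

lemma proj_some_other (b : SB n k) (v : Fin n ⊕ SB n k) (hv : v ≠ Sum.inr b) :
    (starD n k).torsoProj (some b) v = Sum.inr none := by
  classical
  have hmem : v ∉ (starD n k).bag (some b) := by
    rw [starD_bag_some, Set.mem_singleton_iff]
    exact hv
  simp only [TreeCutDecomp.torsoProj, if_neg hmem]
  congr 1
  set P : Option (SB n k) → Prop := fun s => (starD n k).T.Adj (some b) s ∧
      ∃ (h₁ : (starD n k).bagOf v ≠ some b) (h₂ : s ≠ some b),
        ((starD n k).T.induce {x | x ≠ some b}).Reachable ⟨(starD n k).bagOf v, h₁⟩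
          ⟨s, h₂⟩ with hPdef
  have hb1 : (starD n k).bagOf v ≠ some b := by
    intro h
    have hsp := bagOf_spec (starD n k) v
    rw [h, starD_bag_some, Set.mem_singleton_iff] at hsp
    exact hv hsp
  have key : ∀ (u : Option (SB n k)) (h₁ : u ≠ some b),
      ((starD n k).T.induce {x | x ≠ some b}).Reachable ⟨u, h₁⟩ ⟨none, by simp⟩ := by
    intro u h₁
    cases u with
    | none => exact reachable_of_eq rfl
    | some b' => exact SimpleGraph.Adj.reachable ⟨by simp, Or.inr rfl⟩
  have hP : P none := ⟨⟨by simp, Or.inr rfl⟩, hb1, by simp, key _ hb1⟩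
  have hp := pick_spec ⟨none, hP⟩
  obtain ⟨hadj, _⟩ := hp
  obtain ⟨hne, hor⟩ := hadj
  rcases hor with h | h
  · cases h
  · exact h

lemma gnk_adj (a : Fin n) (b : SB n k) (hab : a ∈ b.1.1) :
    (Gnk n k).Adj (Sum.inl a) (Sum.inr b) := by
  obtain ⟨W, l⟩ := b
  rw [Gnk, SimpleGraph.fromRel_adj]
  exact ⟨by simp, Or.inl hab⟩

/-- Edge characterisation of `Gnk`. -/
lemma gnk_edge_iff {e : Sym2 (Fin n ⊕ SB n k)} :
    e ∈ (Gnk n k).edgeSet ↔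
      ∃ (a : Fin n) (b : SB n k), a ∈ b.1.1 ∧ e = s(Sum.inl a, Sum.inr b) := by
  induction e with
  | _ x y =>
    rw [SimpleGraph.mem_edgeSet]
    constructor
    · intro h
      rw [Gnk, SimpleGraph.fromRel_adj] at h
      obtain ⟨hne, hor⟩ := h
      rcases x with a | ⟨W, l⟩ <;> rcases y with a' | ⟨W', l'⟩
      · simp at hor
      · rcases hor with h | h
        · exact ⟨a, (W', l'), h, rfl⟩
        · simp at h
      · rcases hor with h | h
        · simp at h
        · exact ⟨a', (W, l), h, Sym2.eq_swap⟩
      · simp at hor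
    · rintro ⟨a, b, hab, he⟩
      rw [Sym2.eq_iff] at he
      rcases he with ⟨rfl, rfl⟩ | ⟨rfl, rfl⟩
      · exact gnk_adj a b hab
      · exact (gnk_adj a b hab).symm

/-! ### Multiset helpers -/

lemma otherEnds_zero {ω : Type*} (v : ω) : otherEnds v 0 = 0 := rfl

lemma otherEnds_add {ω : Type*} (v : ω) (E F : Multiset (Sym2 ω)) :
    otherEnds v (E + F) = otherEnds v E + otherEnds v F := by
  simp [otherEnds, Multiset.add_bind]

lemma otherEnds_sing {ω : Type*} (v x y : ω) :
    otherEnds v ({s(x, y)} : Multiset (Sym2 ω)) =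
      (if x = v then ({y} : Multiset ω) else 0) + (if y = v then ({x} : Multiset ω) else 0) := by
  simp [otherEnds, Multiset.singleton_bind]

lemma otherEnds_cons {ω : Type*} (v : ω) (e : Sym2 ω) (E : Multiset (Sym2 ω)) :
    otherEnds v (e ::ₘ E) = otherEnds v {e} + otherEnds v E := by
  rw [← Multiset.singleton_add, otherEnds_add]

lemma otherEnds_bind {ω γ : Type*} (v : ω) (m : Multiset γ) (f : γ → Multiset (Sym2 ω)) :
    otherEnds v (m.bind f) = m.bind fun x => otherEnds v (f x) := by
  simp [otherEnds, Multiset.bind_assoc]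

lemma otherEnds_map {ω γ : Type*} (v : ω) (m : Multiset γ) (f : γ → Sym2 ω) :
    otherEnds v (m.map f) = m.bind fun x => otherEnds v ({f x} : Multiset (Sym2 ω)) := by
  rw [otherEnds, Multiset.bind_map]
  exact Multiset.bind_congr fun x _ => by rw [otherEnds, Multiset.singleton_bind]

lemma bind_eq_zero {γ δ : Type*} {m : Multiset γ} {f : γ → Multiset δ}
    (h : ∀ x ∈ m, f x = 0) : m.bind f = 0 := by
  induction m using Multiset.induction_on with
  | empty => simp
  | cons a m ih =>
      rw [Multiset.cons_bind, h a (Multiset.mem_cons_self _ _), zero_add]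
      exact ih fun x hx => h x (Multiset.mem_cons_of_mem hx)

lemma bind_single {γ δ : Type*} [DecidableEq γ] {m : Multiset γ} (hm : m.Nodup) {b : γ}
    (hb : b ∈ m) (f : γ → Multiset δ) (h : ∀ x ∈ m, x ≠ b → f x = 0) : m.bind f = f b := by
  rw [← Multiset.cons_erase hb, Multiset.cons_bind, bind_eq_zero, add_zero]
  intro x hx
  have hxm : x ∈ m := Multiset.mem_of_mem_erase hx
  refine h x hxm fun hxb => ?_
  subst hxb
  exact hm.notMem_erase hx

lemma filter_true' {δ : Type*} (p : δ → Prop) (inst : DecidablePred p) (m : Multiset δ)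
    (h : ∀ x ∈ m, p x) : @Multiset.filter δ p inst m = m :=
  Multiset.filter_eq_self.mpr h

lemma filter_false' {δ : Type*} (p : δ → Prop) (inst : DecidablePred p) (m : Multiset δ)
    (h : ∀ x ∈ m, ¬ p x) : @Multiset.filter δ p inst m = 0 :=
  Multiset.filter_eq_nil.mpr h

lemma filter_bind {γ δ : Type*} (m : Multiset γ) (f : γ → Multiset δ) (p : δ → Prop)
    [DecidablePred p] : (m.bind f).filter p = m.bind fun x => (f x).filter p := by
  induction m using Multiset.induction_on with
  | empty => simp
  | cons a m ih => simp [Multiset.cons_bind, Multiset.filter_add, ih]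

/-! ### The two elements of a pair `W` -/

noncomputable def w1 (W : {W : Finset (Fin n) // W.card = 2}) : Fin n :=
  (Finset.card_eq_two.mp W.2).choose

noncomputable def w2 (W : {W : Finset (Fin n) // W.card = 2}) : Fin n :=
  (Finset.card_eq_two.mp W.2).choose_spec.choose

lemma w_ne (W : {W : Finset (Fin n) // W.card = 2}) : w1 W ≠ w2 W :=
  (Finset.card_eq_two.mp W.2).choose_spec.choose_spec.1

lemma w_eq (W : {W : Finset (Fin n) // W.card = 2}) : W.1 = {w1 W, w2 W} :=
  (Finset.card_eq_two.mp W.2).choose_spec.choose_spec.2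

lemma mem_W_iff {W : {W : Finset (Fin n) // W.card = 2}} {a : Fin n} :
    a ∈ W.1 ↔ a = w1 W ∨ a = w2 W := by
  rw [w_eq W]
  simp

/-! ### The edge multiset of `Gnk` -/

noncomputable def ed1 (b : SB n k) : Sym2 (Fin n ⊕ SB n k) := s(Sum.inl (w1 b.1), Sum.inr b)
noncomputable def ed2 (b : SB n k) : Sym2 (Fin n ⊕ SB n k) := s(Sum.inl (w2 b.1), Sum.inr b)

lemma sym2_snd_eq {b b' : SB n k} {x y : Fin n}
    (h : s(Sum.inl x, (Sum.inr b : Fin n ⊕ SB n k)) = s(Sum.inl y, Sum.inr b')) : b = b' := by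
  rw [Sym2.eq_iff] at h
  rcases h with ⟨h1, h2⟩ | ⟨h1, h2⟩
  · exact Sum.inr.inj h2
  · exact absurd h1 (by simp)

lemma ed1_ne_ed2 (b : SB n k) : ed1 b ≠ ed2 b := by
  intro h
  rw [ed1, ed2, Sym2.eq_iff] at h
  rcases h with ⟨h1, h2⟩ | ⟨h1, h2⟩
  · exact w_ne b.1 (Sum.inl.inj h1)
  · exact absurd h1 (by simp)

lemma edge_val_eq :
    (Set.toFinite (Gnk n k).edgeSet).toFinset.val
      = (Finset.univ : Finset (SB n k)).val.bind (fun b => {ed1 b, ed2 b}) := by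
  refine (Multiset.Nodup.ext (Finset.nodup _) ?_).mpr ?_
  · rw [Multiset.nodup_bind]
    constructor
    · intro b _
      rw [Multiset.insert_eq_cons, Multiset.nodup_cons]
      exact ⟨by simpa using ed1_ne_ed2 b, Multiset.nodup_singleton _⟩
    · refine Multiset.Nodup.pairwise ?_ (Finset.nodup _)
      intro x _ y _ hxy
      rw [Function.onFun, Multiset.disjoint_left]
      intro e he he'
      apply hxy
      have hx : e = ed1 x ∨ e = ed2 x := by simpa using he
      have hy : e = ed1 y ∨ e = ed2 y := by simpa using he'
      rcases hx with rfl | rfl <;> rcases hy with h | h <;>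
        exact sym2_snd_eq (by simpa [ed1, ed2] using h)
  · intro e
    rw [Finset.mem_val, Set.Finite.mem_toFinset, gnk_edge_iff, Multiset.mem_bind]
    constructor
    · rintro ⟨a, b, hab, rfl⟩
      refine ⟨b, by simp, ?_⟩
      rcases mem_W_iff.mp hab with rfl | rfl
      · simp [ed1]
      · simp [ed2]
    · rintro ⟨b, -, hb⟩
      have hb' : e = ed1 b ∨ e = ed2 b := by simpa using hb
      rcases hb' with rfl | rfl
      · exact ⟨w1 b.1, b, mem_W_iff.mpr (Or.inl rfl), rfl⟩
      · exact ⟨w2 b.1, b, mem_W_iff.mpr (Or.inr rfl), rfl⟩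

/-! ### Torso vertices and edges of the star decomposition -/

abbrev Aa (a : Fin n) : (Fin n ⊕ SB n k) ⊕ Option (SB n k) := Sum.inl (Sum.inl a)
abbrev Lf (b : SB n k) : (Fin n ⊕ SB n k) ⊕ Option (SB n k) := Sum.inr (some b)

noncomputable def pairT (b : SB n k) : Multiset (Sym2 ((Fin n ⊕ SB n k) ⊕ Option (SB n k))) :=
  {s(Aa (w1 b.1), Lf b), s(Aa (w2 b.1), Lf b)}

noncomputable def triT (b : SB n k) : Sym2 ((Fin n ⊕ SB n k) ⊕ Option (SB n k)) :=
  s(Aa (w1 b.1), Aa (w2 b.1))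

noncomputable def EtS (S : Finset (SB n k)) :
    Multiset (Sym2 ((Fin n ⊕ SB n k) ⊕ Option (SB n k))) :=
  S.val.bind pairT + (Finset.univ \ S).val.map triT

noncomputable def VtS (S : Finset (SB n k)) : Finset ((Fin n ⊕ SB n k) ⊕ Option (SB n k)) :=
  Finset.univ.image Aa ∪ S.image Lf

lemma mem_torsoVerts_iff {D : TreeCutDecomp (Gnk n k)} {t : D.β} {x : (Fin n ⊕ SB n k) ⊕ D.β} :
    x ∈ D.torsoVerts t ↔
      (∃ v ∈ D.bag t, x = Sum.inl v) ∨ ∃ s, D.T.Adj t s ∧ x = Sum.inr s := by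
  simp only [TreeCutDecomp.torsoVerts, Set.Finite.mem_toFinset, Set.mem_setOf_eq]

lemma torsoVerts_none :
    (starD n k).torsoVerts none = Finset.univ.image Aa ∪ Finset.univ.image Lf := by
  ext x
  rw [mem_torsoVerts_iff]
  simp only [Finset.mem_union, Finset.mem_image, Finset.mem_univ, true_and]
  constructor
  · rintro (⟨v, hv, rfl⟩ | ⟨s, hs, rfl⟩)
    · obtain ⟨a, rfl⟩ := hv
      exact Or.inl ⟨a, rfl⟩
    · rcases s with _ | b
      · exact absurd rfl hs.1
      · exact Or.inr ⟨b, rfl⟩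
  · rintro (⟨a, rfl⟩ | ⟨b, rfl⟩)
    · exact Or.inl ⟨Sum.inl a, ⟨a, rfl⟩, rfl⟩
    · exact Or.inr ⟨some b, ⟨by simp, Or.inl rfl⟩, rfl⟩

lemma torsoEdges_none :
    (starD n k).torsoEdges none = (Finset.univ : Finset (SB n k)).val.bind pairT := by
  rw [TreeCutDecomp.torsoEdges, edge_val_eq, Multiset.map_bind, _root_.filter_bind]
  refine Multiset.bind_congr ?_
  intro b _
  simp only [Multiset.insert_eq_cons, Multiset.map_cons, Multiset.map_singleton]
  have h1 : Sym2.map ((starD n k).torsoProj none) (ed1 b) = s(Aa (w1 b.1), Lf b) := by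
    rw [ed1, Sym2.map_pair_eq, proj_none_inl, proj_none_inr]
  have h2 : Sym2.map ((starD n k).torsoProj none) (ed2 b) = s(Aa (w2 b.1), Lf b) := by
    rw [ed2, Sym2.map_pair_eq, proj_none_inl, proj_none_inr]
  have hd1 : ¬ Sym2.IsDiag s(Aa (w1 b.1), Lf b) := by
    rw [Sym2.mk_isDiag_iff]
    exact fun h => nomatch h
  have hd2 : ¬ Sym2.IsDiag s(Aa (w2 b.1), Lf b) := by
    rw [Sym2.mk_isDiag_iff]
    exact fun h => nomatch h
  rw [h1, h2, pairT, Multiset.insert_eq_cons]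
  refine filter_true' _ _ _ ?_
  intro e he
  rcases Multiset.mem_cons.mp he with rfl | he'
  · exact hd1
  · rw [Multiset.mem_singleton.mp he']
    exact hd2

lemma torsoVerts_some (b : SB n k) :
    (starD n k).torsoVerts (some b) = {Sum.inl (Sum.inr b), Sum.inr none} := by
  ext x
  rw [mem_torsoVerts_iff]
  simp only [Finset.mem_insert, Finset.mem_singleton]
  constructor
  · rintro (⟨v, hv, rfl⟩ | ⟨s, hs, rfl⟩)
    · rw [Set.mem_singleton_iff] at hv
      subst hv
      exact Or.inl rfl
    · rcases hs with ⟨hne, h | h⟩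
      · cases h
      · subst h
        exact Or.inr rfl
  · rintro (rfl | rfl)
    · exact Or.inl ⟨Sum.inr b, rfl, rfl⟩
    · exact Or.inr ⟨none, ⟨by simp, Or.inr rfl⟩, rfl⟩

noncomputable def eT (b : SB n k) : Sym2 ((Fin n ⊕ SB n k) ⊕ Option (SB n k)) :=
  s(Sum.inr none, Sum.inl (Sum.inr b))

lemma torsoEdges_some (b : SB n k) :
    (starD n k).torsoEdges (some b) = {eT b, eT b} := by
  rw [TreeCutDecomp.torsoEdges, edge_val_eq, Multiset.map_bind, _root_.filter_bind]
  rw [bind_single (Finset.nodup _) (Finset.mem_val.mpr (Finset.mem_univ b))]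
  · simp only [Multiset.insert_eq_cons, Multiset.map_cons, Multiset.map_singleton]
    have h1 : Sym2.map ((starD n k).torsoProj (some b)) (ed1 b) = eT b := by
      rw [ed1, Sym2.map_pair_eq, proj_some_other b _ (by simp), proj_some_self, eT]
    have h2 : Sym2.map ((starD n k).torsoProj (some b)) (ed2 b) = eT b := by
      rw [ed2, Sym2.map_pair_eq, proj_some_other b _ (by simp), proj_some_self, eT]
    have hd : ¬ (eT b).IsDiag := by
      rw [eT, Sym2.mk_isDiag_iff]
      exact fun h => nomatch h
    rw [h1, h2]
    refine filter_true' _ _ _ ?_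
    intro e he
    rcases Multiset.mem_cons.mp he with rfl | he'
    · exact hd
    · rw [Multiset.mem_singleton.mp he']
      exact hd
  · intro x _ hxb
    simp only [Multiset.insert_eq_cons, Multiset.map_cons, Multiset.map_singleton]
    have h1 : Sym2.map ((starD n k).torsoProj (some b)) (ed1 x)
        = s((Sum.inr none : (Fin n ⊕ SB n k) ⊕ Option (SB n k)), Sum.inr none) := by
      rw [ed1, Sym2.map_pair_eq, proj_some_other b _ (by simp),
        proj_some_other b _ (by simp [hxb])]
    have h2 : Sym2.map ((starD n k).torsoProj (some b)) (ed2 x)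
        = s((Sum.inr none : (Fin n ⊕ SB n k) ⊕ Option (SB n k)), Sum.inr none) := by
      rw [ed2, Sym2.map_pair_eq, proj_some_other b _ (by simp),
        proj_some_other b _ (by simp [hxb])]
    have hd : ¬¬ Sym2.IsDiag s((Sum.inr none : (Fin n ⊕ SB n k) ⊕ Option (SB n k)),
        Sum.inr none) := not_not_intro (Sym2.mk_isDiag_iff.mpr rfl)
    rw [h1, h2]
    refine filter_false' _ _ _ ?_
    intro e he
    have he' : e = s((Sum.inr none : (Fin n ⊕ SB n k) ⊕ Option (SB n k)), Sum.inr none) := by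
      rcases Multiset.mem_cons.mp he with rfl | he'
      · rfl
      · exact Multiset.mem_singleton.mp he'
    subst he'
    exact not_not_intro (Sym2.mk_isDiag_iff.mpr rfl)

/-! ### The set `X` and suppression steps -/

noncomputable def Xf (t : Option (SB n k)) : Finset ((Fin n ⊕ SB n k) ⊕ Option (SB n k)) :=
  (Set.toFinite (Sum.inl '' (starD n k).bag t)).toFinset

lemma inr_not_mem_Xf (t : Option (SB n k)) (y : Option (SB n k)) :
    (Sum.inr y : (Fin n ⊕ SB n k) ⊕ Option (SB n k)) ∉ Xf t := by
  rw [Xf, Set.Finite.mem_toFinset]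
  rintro ⟨v, -, h⟩
  exact nomatch h

lemma otherEnds_pairT_self (b : SB n k) :
    otherEnds (Lf b) (pairT b) = {Aa (w1 b.1), Aa (w2 b.1)} := by
  rw [pairT, Multiset.insert_eq_cons, otherEnds_cons, otherEnds_sing, otherEnds_sing]
  simp [Multiset.singleton_add]

lemma otherEnds_pairT_ne (b x : SB n k) (hxb : x ≠ b) : otherEnds (Lf b) (pairT x) = 0 := by
  rw [pairT, Multiset.insert_eq_cons, otherEnds_cons, otherEnds_sing, otherEnds_sing]
  simp [hxb]

lemma otherEnds_triT (b : SB n k) (x : SB n k) :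
    otherEnds (Lf b) ({triT x} : Multiset _) = 0 := by
  rw [triT, otherEnds_sing]
  simp

lemma otherEnds_EtS (S : Finset (SB n k)) (b : SB n k) (hb : b ∉ S) :
    otherEnds (Lf b) (EtS (insert b S)) = {Aa (w1 b.1), Aa (w2 b.1)} := by
  rw [EtS, otherEnds_add, otherEnds_bind, Finset.insert_val_of_notMem hb, Multiset.cons_bind]
  have hz1 : (S.val.bind fun x => otherEnds (Lf b) (pairT x)) = 0 :=
    bind_eq_zero fun x hx => otherEnds_pairT_ne b x (by rintro rfl; exact hb hx)
  have hz2 : otherEnds (Lf b) ((Finset.univ \ insert b S).val.map triT) = 0 := by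
    rw [otherEnds_map]
    exact bind_eq_zero fun x _ => otherEnds_triT b x
  rw [hz1, hz2, otherEnds_pairT_self, add_zero, add_zero]

lemma sdiff_insert_eq (S : Finset (SB n k)) (b : SB n k) (hb : b ∉ S) :
    (Finset.univ \ S) = insert b (Finset.univ \ insert b S) := by
  ext x
  by_cases hxb : x = b <;> simp [hxb, hb]

lemma edge_update (S : Finset (SB n k)) (b : SB n k) (hb : b ∉ S)
    (inst : DecidablePred fun e : Sym2 ((Fin n ⊕ SB n k) ⊕ Option (SB n k)) => ¬ Lf b ∈ e) :
    EtS S = (@Multiset.filter _ (fun e => ¬ Lf b ∈ e) inst (EtS (insert b S)))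
      + {triT b} := by
  rw [EtS, EtS, Multiset.filter_add, _root_.filter_bind, Finset.insert_val_of_notMem hb,
    Multiset.cons_bind]
  have h1 : (@Multiset.filter _ (fun e => ¬ Lf b ∈ e) inst (pairT b)) = 0 := by
    refine filter_false' _ inst _ ?_
    intro e he
    rw [pairT, Multiset.insert_eq_cons] at he
    have he' : e = s(Aa (w1 b.1), Lf b) ∨ e = s(Aa (w2 b.1), Lf b) := by
      rcases Multiset.mem_cons.mp he with rfl | hx
      · exact Or.inl rfl
      · exact Or.inr (Multiset.mem_singleton.mp hx)
    rcases he' with rfl | rfl <;> exact not_not_intro (Sym2.mem_iff.mpr (Or.inr rfl))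
  have h2 : (S.val.bind fun x => @Multiset.filter _ (fun e => ¬ Lf b ∈ e) inst (pairT x))
      = S.val.bind pairT := by
    refine Multiset.bind_congr ?_
    intro x hx
    refine filter_true' _ inst _ ?_
    intro e he
    have hxb : x ≠ b := by rintro rfl; exact hb hx
    rw [pairT, Multiset.insert_eq_cons] at he
    have he' : e = s(Aa (w1 x.1), Lf x) ∨ e = s(Aa (w2 x.1), Lf x) := by
      rcases Multiset.mem_cons.mp he with rfl | hy
      · exact Or.inl rfl
      · exact Or.inr (Multiset.mem_singleton.mp hy)
    rcases he' with rfl | rfl <;>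
      · intro hmem
        rcases Sym2.mem_iff.mp hmem with h | h
        · exact nomatch h
        · exact hxb (Option.some.inj (Sum.inr.inj h)).symm
  have h3 : (@Multiset.filter _ (fun e => ¬ Lf b ∈ e) inst
      ((Finset.univ \ insert b S).val.map triT)) = (Finset.univ \ insert b S).val.map triT := by
    refine filter_true' _ inst _ ?_
    intro e he
    obtain ⟨x, -, rfl⟩ := Multiset.mem_map.mp he
    intro hmem
    rcases Sym2.mem_iff.mp hmem with h | h <;> exact nomatch h
  rw [h1, h2, h3, zero_add]
  rw [sdiff_insert_eq S b hb, Finset.insert_val_of_notMem (by simp), Multiset.map_cons,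
    ← Multiset.singleton_add]
  abel

lemma erasec {γ : Type*} (inst1 inst2 : DecidableEq γ) (s : Finset γ) (a : γ) :
    @Finset.erase γ inst1 s a = @Finset.erase γ inst2 s a := by
  congr!

lemma VtS_erase0 (S : Finset (SB n k)) (b : SB n k) (hb : b ∉ S) :
    VtS S = (VtS (insert b S)).erase (Lf b) := by
  have h1 : (Lf b : (Fin n ⊕ SB n k) ⊕ Option (SB n k)) ∉ S.image Lf := by
    rw [Finset.mem_image]
    rintro ⟨c, hc, h⟩
    have : c = b := Option.some.inj (Sum.inr.inj h)
    exact hb (this ▸ hc)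
  have h2 : (Lf b : (Fin n ⊕ SB n k) ⊕ Option (SB n k)) ∉ Finset.univ.image Aa := by
    rw [Finset.mem_image]
    rintro ⟨a, -, h⟩
    exact nomatch h
  rw [VtS, VtS, Finset.image_insert, Finset.erase_union_distrib, Finset.erase_insert h1,
    Finset.erase_eq_of_notMem h2]

lemma VtS_erase (S : Finset (SB n k)) (b : SB n k) (hb : b ∉ S)
    (inst : DecidableEq ((Fin n ⊕ SB n k) ⊕ Option (SB n k))) :
    VtS S = @Finset.erase _ inst (VtS (insert b S)) (Lf b) :=
  (VtS_erase0 S b hb).trans (erasec _ inst _ _)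

lemma chainStep (S : Finset (SB n k)) (b : SB n k) (hb : b ∉ S) :
    SuppStep (Xf none) (VtS (insert b S), EtS (insert b S)) (VtS S, EtS S) := by
  refine ⟨Lf b, ?_, inr_not_mem_Xf none (some b), VtS_erase S b hb _,
    Or.inr ⟨Aa (w1 b.1), Aa (w2 b.1), otherEnds_EtS S b hb, ?_⟩⟩
  · rw [VtS]
    exact Finset.mem_union_right _ (Finset.mem_image.mpr ⟨b, Finset.mem_insert_self b S, rfl⟩)
  · exact edge_update S b hb _

lemma chain (S : Finset (SB n k)) :
    Relation.ReflTransGen (SuppStep (Xf none)) (VtS S, EtS S) (VtS ∅, EtS ∅) := by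
  classical
  induction S using Finset.induction_on with
  | empty => exact Relation.ReflTransGen.refl
  | @insert b S hb ih => exact Relation.ReflTransGen.head (chainStep S b hb) ih

lemma mem_VtS_empty {x : (Fin n ⊕ SB n k) ⊕ Option (SB n k)} :
    x ∈ VtS (∅ : Finset (SB n k)) ↔ ∃ a : Fin n, Aa a = x := by
  rw [VtS, Finset.image_empty, Finset.union_empty, Finset.mem_image]
  simp

lemma card_VtS_empty : (VtS (∅ : Finset (SB n k))).card ≤ n := by
  rw [VtS, Finset.image_empty, Finset.union_empty]
  refine le_trans Finset.card_image_le ?_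
  simp

/-! ### Adhesion bounds -/

lemma star_isolated' (b : SB n k) :
    ∀ y, ¬ ((starT n k).deleteEdges {s(some b, none)}).Adj (some b) y := by
  have h : ({s((some b : Option (SB n k)), none)} : Set (Sym2 (Option (SB n k))))
      = {s(none, some b)} := by rw [Sym2.eq_swap]
  rw [h]
  exact star_isolated b

lemma sideSet_some_subset (b : SB n k) (v : Fin n ⊕ SB n k)
    (hv : v ∈ (starD n k).sideSet (some b) none) : v = Sum.inr b := by
  obtain ⟨s, hvs, hr⟩ := hv
  have hs : s = some b := reach_eq_isolated (star_isolated' b) hr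
  subst hs
  exact hvs

lemma adhesion_le (x y : Option (SB n k)) (hxy : (starT n k).Adj x y) :
    ((starD n k).adhesion x y).ncard ≤ 2 := by
  obtain ⟨hne, hor⟩ := hxy
  have key : ∀ b : SB n k,
      ((starD n k).adhesion x y
        ⊆ ↑((b.1.1).image fun a => s((Sum.inl a : Fin n ⊕ SB n k), Sum.inr b))) →
      ((starD n k).adhesion x y).ncard ≤ 2 := by
    intro b hsub
    have h1 := Set.ncard_le_ncard hsub (Finset.finite_toSet _)
    rw [Set.ncard_coe_finset] at h1
    refine le_trans h1 (le_trans Finset.card_image_le ?_)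
    rw [b.1.2]
  rcases hor with rfl | rfl
  · rcases y with _ | b
    · exact absurd rfl hne
    · refine key b ?_
      rintro e ⟨hE, u, w, rfl, hu, hw⟩
      have hwb : w = Sum.inr b := sideSet_some_subset b w hw
      subst hwb
      obtain ⟨a, b', hab, he⟩ := gnk_edge_iff.mp hE
      rw [Sym2.eq_iff] at he
      rcases he with ⟨rfl, h2⟩ | ⟨rfl, h2⟩
      · have hb' : b' = b := Sum.inr.inj h2.symm
        subst hb'
        rw [Finset.mem_coe, Finset.mem_image]
        exact ⟨a, hab, rfl⟩
      · exact absurd h2.symm (by simp)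
  · rcases x with _ | b
    · exact absurd rfl hne
    · refine key b ?_
      rintro e ⟨hE, u, w, rfl, hu, hw⟩
      have hub : u = Sum.inr b := sideSet_some_subset b u hu
      subst hub
      obtain ⟨a, b', hab, he⟩ := gnk_edge_iff.mp hE
      rw [Sym2.eq_iff] at he
      rcases he with ⟨h1, rfl⟩ | ⟨h1, rfl⟩
      · exact absurd h1 (by simp)
      · have hb' : b' = b := Sum.inr.inj h1.symm
        subst hb'
        rw [Finset.mem_coe, Finset.mem_image]
        refine ⟨a, hab, ?_⟩
        rw [Sym2.eq_swap]

end Stmt11Aux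

/-- For all positive integers `α` and `k`, the graph `G^{α+1}_k` has tree-cut width at
most `α + 1`. -/
theorem stmt_11 (α k : ℕ) (hα : 0 < α) (hk : 0 < k) :
    tcw (Gnk (α + 1) k) ≤ α + 1 := by
  apply Nat.sInf_le
  refine ⟨starD (α + 1) k, ?_, ?_⟩
  · intro x y hxy
    exact le_trans (adhesion_le x y hxy) (by omega)
  · intro t
    rcases t with _ | b
    · -- centre node
      refine ⟨(VtS ∅, EtS ∅), ?_, ?_, ?_⟩
      · have h1 : (starD (α + 1) k).torsoVerts none = VtS Finset.univ := by
          rw [torsoVerts_none, VtS]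
        have h2 : (starD (α + 1) k).torsoEdges none = EtS Finset.univ := by
          rw [torsoEdges_none, EtS, Finset.sdiff_self]
          simp
        rw [h1, h2]
        exact chain Finset.univ
      · intro v hv hvX
        exfalso
        apply hvX
        obtain ⟨a, rfl⟩ := mem_VtS_empty.mp hv
        rw [Set.Finite.mem_toFinset]
        exact ⟨Sum.inl a, ⟨a, rfl⟩, rfl⟩
      · exact card_VtS_empty
    · -- leaf node
      refine ⟨(@Finset.erase _ (fun a b => Classical.propDecidable _)
          ((starD (α + 1) k).torsoVerts (some b)) (Sum.inr none), ?E), ?one, ?two, ?three⟩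
      case one =>
        refine Relation.ReflTransGen.single ?_
        refine ⟨Sum.inr none, ?_, ?_, rfl,
          Or.inr ⟨Sum.inl (Sum.inr b), Sum.inl (Sum.inr b), ?_, ?_⟩⟩
        · rw [torsoVerts_some]
          simp
        · intro hmem
          rw [Set.Finite.mem_toFinset] at hmem
          obtain ⟨v, -, h⟩ := hmem
          exact nomatch h
        · rw [torsoEdges_some, eT, Multiset.insert_eq_cons, otherEnds_cons, otherEnds_sing]
          simp [Multiset.singleton_add]
        · exact rfl
      case two =>
        intro v hv hvX
        exfalso
        apply hvX
        obtain ⟨hne, hmem⟩ :=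
          (@Finset.mem_erase _ (fun a b => Classical.propDecidable _) _ _ _).mp hv
        rw [torsoVerts_some] at hmem
        rcases Finset.mem_insert.mp hmem with rfl | h
        · rw [Set.Finite.mem_toFinset]
          exact ⟨Sum.inr b, rfl, rfl⟩
        · exact absurd (Finset.mem_singleton.mp h) hne
      case three =>
        have h2 : ((starD (α + 1) k).torsoVerts (some b)).card = 2 := by
          rw [torsoVerts_some, Finset.card_insert_of_notMem (by simp), Finset.card_singleton]
        refine le_trans (Finset.card_le_card
          (@Finset.erase_subset _ (fun a b => Classical.propDecidable _) _ _)) ?_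
        rw [h2]
        omega
end

section
/- For every graph G and every positive integer α, ecrw_1(G) ≤ secw(G) − 1, where secw denotes super edge-cut width; in particular secw is an upper bound (up to a function) for every ecrw_α. -/
open SimpleGraph

universe u

/-- `F` is a maximal spanning forest of `H`: a subforest with the same reachability
relation (so adding any further edge of `H` would create a cycle). -/
def IsMaxSpanningForest {W : Type*} (H F : SimpleGraph W) : Prop :=
  F ≤ H ∧ F.IsAcyclic ∧ ∀ u v : W, H.Reachable u v ↔ F.Reachable u v

/-- `v` lies on the unique path of the forest `F` between `u` and `w`. -/
def OnForestPath {W : Type*} (F : SimpleGraph W) (v u w : W) : Prop :=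
  F.Reachable u w ∧ (v = u ∨ v = w ∨ ∃ (hu : u ≠ v) (hw : w ≠ v),
    ¬ (F.induce {x | x ≠ v}).Reachable ⟨u, hu⟩ ⟨w, hw⟩)

/-- The size of the local feedback edge set at `v` for the pair `(H, F)`:
the number of edges of `H` outside `F` whose unique `F`-path passes through `v`. -/
noncomputable def localFES {W : Type*} (H F : SimpleGraph W) (v : W) : ℕ :=
  {e : Sym2 W | e ∈ H.edgeSet ∧ e ∉ F.edgeSet ∧
    ∃ u w, e = s(u, w) ∧ OnForestPath F v u w}.ncard

/-- The super edge-cut width of `G`: the minimum, over supergraphs `H` of `G` and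
maximal spanning forests `F` of `H`, of `1 + max_v |E_loc(v)|`. -/
noncomputable def secw {V : Type u} [Fintype V] (G : SimpleGraph V) : ℕ :=
  sInf {m | ∃ (W : Type) (_ : Fintype W) (H : SimpleGraph W) (f : V ↪ W)
    (F : SimpleGraph W), (∀ u v : V, G.Adj u v → H.Adj (f u) (f v)) ∧
    IsMaxSpanningForest H F ∧ ∀ w : W, localFES H F w + 1 ≤ m}


lemma acyclic_sup_edge {W : Type*} {G : SimpleGraph W} {s t : W} (hG : G.IsAcyclic)
    (h : ¬ G.Reachable s t) : (G ⊔ SimpleGraph.edge s t).IsAcyclic := by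
  have hst : s ≠ t := fun e => h (e ▸ Reachable.refl s)
  intro u c hc
  by_cases he : s(s, t) ∈ c.edges
  · have hr := (adj_and_reachable_delete_edges_iff_exists_cycle).mpr ⟨u, c, hc, he⟩
    apply h
    refine Reachable.mono ?_ hr.2
    intro a b hab
    rcases hab.1 with hG' | hE
    · exact hG'
    · exact absurd hE hab.2
  · have hsub : ∀ e ∈ c.edges, e ∈ G.edgeSet := by
      intro e hec
      have := c.edges_subset_edgeSet hec
      rw [edgeSet_sup, SimpleGraph.edge_edgeSet_of_ne hst] at this
      rcases this with h1 | h1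
      · exact h1
      · exact absurd (h1 ▸ hec) he
    exact hG (c.transfer G hsub) (hc.transfer hsub)

lemma reachable_of_adj_reachable {W : Type*} {H F : SimpleGraph W}
    (h : ∀ a b : W, H.Adj a b → F.Reachable a b) {u v : W} (hr : H.Reachable u v) :
    F.Reachable u v := by
  obtain ⟨p⟩ := hr
  induction p with
  | nil => exact Reachable.refl _
  | cons ha _ ih => exact (h _ _ ha).trans ih

lemma exists_max_spanning_forest {W : Type*} [Finite W] (H : SimpleGraph W) :
    ∃ F : SimpleGraph W, IsMaxSpanningForest H F := by
  obtain ⟨F, ⟨hFH, hFa⟩, hmax⟩ := Set.Finite.exists_maximalFor id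
    {F : SimpleGraph W | F ≤ H ∧ F.IsAcyclic} (Set.toFinite _) ⟨⊥, bot_le, isAcyclic_bot⟩
  have hadj : ∀ a b : W, H.Adj a b → F.Reachable a b := by
    intro a b hab
    by_contra hnr
    have hle : SimpleGraph.edge a b ≤ H := by
      intro x y hxy
      rw [SimpleGraph.edge_adj] at hxy
      rcases hxy.1 with ⟨rfl, rfl⟩ | ⟨rfl, rfl⟩
      · exact hab
      · exact hab.symm
    have hmem : F ⊔ SimpleGraph.edge a b ∈ {F : SimpleGraph W | F ≤ H ∧ F.IsAcyclic} :=
      ⟨sup_le hFH hle, acyclic_sup_edge hFa hnr⟩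
    have heq : F = F ⊔ SimpleGraph.edge a b := le_antisymm le_sup_left (hmax hmem le_sup_left)
    have : (F ⊔ SimpleGraph.edge a b).Adj a b := by
      refine Or.inr ?_
      rw [SimpleGraph.edge_adj]
      exact ⟨Or.inl ⟨rfl, rfl⟩, fun e => hnr (e ▸ Reachable.refl a)⟩
    rw [← heq] at this
    exact hnr this.reachable
  exact ⟨F, hFH, hFa, fun u v =>
    ⟨fun hr => reachable_of_adj_reachable hadj hr, fun hr => hr.mono hFH⟩⟩

lemma exists_tree_ge {W : Type*} [Finite W] [Nonempty W] {F : SimpleGraph W}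
    (hF : F.IsAcyclic) : ∃ T : SimpleGraph W, F ≤ T ∧ T.IsTree := by
  obtain ⟨T, ⟨hFT, hTa⟩, hmax⟩ := Set.Finite.exists_maximalFor id
    {T : SimpleGraph W | F ≤ T ∧ T.IsAcyclic} (Set.toFinite _) ⟨F, le_rfl, hF⟩
  refine ⟨T, hFT, ⟨⟨fun u v => ?_⟩, hTa⟩⟩
  by_contra hnr
  have hmem : T ⊔ SimpleGraph.edge u v ∈ {T : SimpleGraph W | F ≤ T ∧ T.IsAcyclic} :=
    ⟨le_trans hFT le_sup_left, acyclic_sup_edge hTa hnr⟩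
  have heq : T = T ⊔ SimpleGraph.edge u v := le_antisymm le_sup_left (hmax hmem le_sup_left)
  have : (T ⊔ SimpleGraph.edge u v).Adj u v := by
    refine Or.inr ?_
    rw [SimpleGraph.edge_adj]
    exact ⟨Or.inl ⟨rfl, rfl⟩, fun e => hnr (e ▸ Reachable.refl u)⟩
  rw [← heq] at this
  exact hnr this.reachable

/-- For every graph `G` and every positive integer `α`, `ecrw_1(G) ≤ secw(G) − 1`;
in particular, `ecrw_α(G) ≤ secw(G) − 1`, so super edge-cut width is an upper bound
for every `α`-edge-crossing width. -/
theorem stmt_12 {V : Type u} [Fintype V] (G : SimpleGraph V) (α : ℕ) (hα : 0 < α) :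
    ecrwA G 1 ≤ secw G - 1 ∧ ecrwA G α ≤ secw G - 1 := by
  classical
  have key : ∀ a : ℕ, 0 < a → ecrwA G a ≤ secw G - 1 := by
    intro a ha
    by_cases hV : Nonempty V
    · -- the secw set is nonempty
      have hne : Set.Nonempty {m | ∃ (W : Type) (_ : Fintype W) (H : SimpleGraph W) (f : V ↪ W)
          (F : SimpleGraph W), (∀ u v : V, G.Adj u v → H.Adj (f u) (f v)) ∧
          IsMaxSpanningForest H F ∧ ∀ w : W, localFES H F w + 1 ≤ m} := by
        obtain ⟨F, hF⟩ := exists_max_spanning_forest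
          (G.map (Fintype.equivFin V).toEmbedding)
        refine ⟨Nat.card (Sym2 (Fin (Fintype.card V))) + 1, Fin (Fintype.card V), inferInstance,
          G.map (Fintype.equivFin V).toEmbedding, (Fintype.equivFin V).toEmbedding, F,
          fun u v h => ⟨(Fintype.equivFin V).toEmbedding.injective.ne h.ne, u, v, h, rfl, rfl⟩, hF, fun w => ?_⟩
        have hb : localFES (G.map (Fintype.equivFin V).toEmbedding) F w
            ≤ Nat.card (Sym2 (Fin (Fintype.card V))) := by
          rw [← Set.ncard_univ]
          exact Set.ncard_le_ncard (Set.subset_univ _) Set.finite_univ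
        omega
      have hmem : secw G ∈ {m | ∃ (W : Type) (_ : Fintype W) (H : SimpleGraph W) (f : V ↪ W)
          (F : SimpleGraph W), (∀ u v : V, G.Adj u v → H.Adj (f u) (f v)) ∧
          IsMaxSpanningForest H F ∧ ∀ w : W, localFES H F w + 1 ≤ m} := Nat.sInf_mem hne
      obtain ⟨W, iW, H, f, F, hadj, hmsf, hbound⟩ := hmem
      haveI := iW
      obtain ⟨v0⟩ := hV
      haveI : Nonempty W := ⟨f v0⟩
      obtain ⟨T, hFT, hT⟩ := exists_tree_ge hmsf.2.1
      refine Nat.sInf_le ⟨⟨W, iW, T, hT, fun w => {v | f v = w}, ?_, fun v => ⟨f v, rfl⟩⟩, ?_, ?_⟩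
      · intro s t hst
        rw [Set.disjoint_left]
        intro v h1 h2
        exact hst ((h1 : f v = s).symm.trans (h2 : f v = t))
      · intro t
        refine le_trans ?_ ha
        rw [Set.ncard_le_one (Set.toFinite _)]
        intro x hx y hy
        exact f.injective ((hx : f x = t).trans (hy : f y = t).symm)
      · intro t
        unfold TreeCutDecomp.crossNum
        have hb := hbound t
        have hinj : Function.Injective (Sym2.map f) := Sym2.map.injective f.injective
        have hle : ∀ S : Set (Sym2 V), Sym2.map f '' S ⊆
            {e : Sym2 W | e ∈ H.edgeSet ∧ e ∉ F.edgeSet ∧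
              ∃ u w, e = s(u, w) ∧ OnForestPath F t u w} → S.ncard ≤ localFES H F t := by
          intro S hS
          rw [← Set.ncard_image_of_injective S hinj]
          exact Set.ncard_le_ncard hS (Set.toFinite _)
        refine le_trans (hle _ ?_) (by omega)
        rintro _ ⟨e, he, rfl⟩
        obtain ⟨heG, u, v, s₁, s₂, h₁, h₂, rfl, hu, hv, hnr⟩ := he
        have hu' : f u = s₁ := hu
        have hv' : f v = s₂ := hv
        subst hu' hv'
        rw [Sym2.map_pair_eq]
        have hHadj : H.Adj (f u) (f v) := hadj u v heG
        refine ⟨hHadj, ?_, f u, f v, rfl, ?_, Or.inr (Or.inr ⟨h₁, h₂, fun hr => ?_⟩)⟩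
        · intro hFe
          exact hnr (SimpleGraph.Adj.reachable (hFT hFe))
        · exact reachable_of_adj_reachable
            (fun x y h => (hmsf.2.2 x y).mp h.reachable) hHadj.reachable
        · exact hnr (hr.mono (fun x y hxy => hFT hxy))
    · -- V is empty
      haveI : IsEmpty V := not_nonempty_iff.mp hV
      have h0 : (0 : ℕ) ∈ {k | ∃ D : TreeCutDecomp G, D.ThickLE a ∧ D.CrossLE k} := by
        refine ⟨⟨PUnit, inferInstance, ⊥,
          ⟨⟨fun u v => by rw [Subsingleton.elim u v]⟩, isAcyclic_bot⟩,
          fun _ => ∅, fun _ _ _ => by simp, fun v => (IsEmpty.false v).elim⟩, ?_, ?_⟩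
        · intro t
          simp
        · intro t
          unfold TreeCutDecomp.crossNum
          have hempty : ∀ (P : Sym2 V → Prop), {e : Sym2 V | P e} = ∅ := by
            intro P
            ext e
            induction e using Sym2.ind with
            | _ x y => exact (IsEmpty.false x).elim
          rw [hempty, Set.ncard_empty]
      exact le_trans (Nat.sInf_le h0) (Nat.zero_le _)
  exact ⟨key 1 one_pos, key α hα⟩
end

section
/- Let q, t be positive integers and B ⊆ [q] × [t]. For every set P of vectors in ℕ^q there exists a subset P* ⊆ P with |P*| ≤ q!·2^{q(q+1)/2}·t^{q−1}·(t+1) such that for every W ∈ ℕ^t, if some V ∈ P is B-compatible with W, then some V* ∈ P* is B-compatible with W. -/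
/-- `(V, W)` is `B`-compatible: `V i ≠ W j` for every `(i, j) ∈ B`. -/
def BCompatible {q t : ℕ} (B : Set (Fin q × Fin t)) (V : Fin q → ℕ) (W : Fin t → ℕ) : Prop :=
  ∀ p ∈ B, V p.1 ≠ W p.2

/-- Triangular number identity. -/
lemma tri_succ (q : ℕ) : q * (q + 1) / 2 = q * (q - 1) / 2 + q := by
  have h1 := Finset.sum_range_id_mul_two q
  have h2 := Finset.sum_range_id_mul_two (q + 1)
  have h3 : (∑ i ∈ Finset.range (q + 1), i) = (∑ i ∈ Finset.range q, i) + q :=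
    Finset.sum_range_succ _ q
  have hA : q * (q + 1) = ((∑ i ∈ Finset.range q, i) + q) * 2 := by
    rw [← h3, h2]; simp [Nat.mul_comm]
  have hB : q * (q - 1) = (∑ i ∈ Finset.range q, i) * 2 := h1.symm
  rw [hA, hB]
  omega

lemma pow_self_le : ∀ q : ℕ, q ^ q ≤ q.factorial * 2 ^ (q * (q - 1) / 2) := by
  intro q
  induction q with
  | zero => simp
  | succ q ih =>
    rcases Nat.eq_zero_or_pos q with rfl | hq
    · simp
    · have he : q + q * (q - 1) / 2 = (q + 1) * ((q + 1) - 1) / 2 := by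
        have := tri_succ q
        have h2 : (q + 1) * ((q + 1) - 1) = q * (q + 1) := by
          simp [Nat.mul_comm]
        rw [h2]; omega
      calc (q + 1) ^ (q + 1) = (q + 1) * (q + 1) ^ q := by ring
        _ ≤ (q + 1) * (2 * q) ^ q := by gcongr; omega
        _ = (q + 1) * (2 ^ q * q ^ q) := by rw [mul_pow]
        _ ≤ (q + 1) * (2 ^ q * (q.factorial * 2 ^ (q * (q - 1) / 2))) := by gcongr
        _ = (q + 1) * q.factorial * 2 ^ (q + q * (q - 1) / 2) := by rw [pow_add]; ring
        _ = (q + 1).factorial * 2 ^ ((q + 1) * ((q + 1) - 1) / 2) := by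
            rw [Nat.factorial_succ, he]

def gfun (c : ℕ) : ℕ → ℕ
  | 0 => 1
  | a + 1 => c * gfun c a + 1

lemma gfun_le (c : ℕ) (hc : 1 ≤ c) : ∀ a, gfun c a ≤ (a + 1) * c ^ a := by
  intro a
  induction a with
  | zero => simp [gfun]
  | succ a ih =>
    have h1 : 1 ≤ c ^ (a + 1) := Nat.one_le_pow _ _ hc
    calc gfun c (a + 1) = c * gfun c a + 1 := rfl
      _ ≤ c * ((a + 1) * c ^ a) + 1 := by gcongr
      _ = (a + 1) * c ^ (a + 1) + 1 := by ring
      _ ≤ (a + 1) * c ^ (a + 1) + c ^ (a + 1) := by gcongr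
      _ = (a + 1 + 1) * c ^ (a + 1) := by ring

lemma skew_bound {q t : ℕ} (hq : 0 < q) (ht : 0 < t) (B : Set (Fin q × Fin t)) :
    ∀ (a : ℕ) (A : Finset (Fin q)), A.card ≤ a →
    ∀ (N : ℕ) (V : ℕ → Fin q → ℕ) (W : ℕ → Fin t → ℕ),
      (∀ k, k < N → BCompatible B (V k) (W k)) →
      (∀ m k, m < k → k < N → ∃ i ∈ A, ∃ j, (i, j) ∈ B ∧ V m i = W k j) →
      N ≤ gfun (q * t) a := by
  intro a
  induction a with
  | zero =>
    intro A hA N V W _ hkill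
    by_contra h
    push_neg at h
    have h2 : 1 < N := by simpa [gfun] using h
    obtain ⟨i, hiA, _⟩ := hkill 0 1 Nat.one_pos h2
    have hAe : A = ∅ := Finset.card_eq_zero.mp (Nat.le_antisymm hA (Nat.zero_le _))
    simp [hAe] at hiA
  | succ a ih =>
    intro A hA N V W hcompat hkill
    by_contra hN
    push_neg at hN
    have hunfold : gfun (q * t) (a + 1) = q * t * gfun (q * t) a + 1 := rfl
    set G := gfun (q * t) a with hG
    have hNge : q * t * G + 2 ≤ N := by omega
    have hpair : ∀ m, m < N - 1 →
        ∃ p : Fin q × Fin t, p.1 ∈ A ∧ p ∈ B ∧ V m p.1 = W (N - 1) p.2 := by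
      intro m hm
      obtain ⟨i, hiA, j, hjB, hEq⟩ := hkill m (N - 1) hm (by omega)
      exact ⟨(i, j), hiA, hjB, hEq⟩
    classical
    let f : ℕ → Fin q × Fin t := fun m =>
      if h : m < N - 1 then (hpair m h).choose else ⟨⟨0, hq⟩, ⟨0, ht⟩⟩
    have hmaps : ∀ m ∈ Finset.range (N - 1), f m ∈ A ×ˢ (Finset.univ : Finset (Fin t)) := by
      intro m hm
      simp only [Finset.mem_range] at hm
      have hspec := (hpair m hm).choose_spec
      simp only [f, dif_pos hm, Finset.mem_product, Finset.mem_univ, and_true]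
      exact hspec.1
    have hcard : (A ×ˢ (Finset.univ : Finset (Fin t))).card * G < (Finset.range (N - 1)).card := by
      rw [Finset.card_product, Finset.card_range, Finset.card_univ, Fintype.card_fin]
      have hAq : A.card ≤ q := by
        have := Finset.card_le_univ A
        simpa using this
      have h1 : A.card * t * G ≤ q * t * G := by gcongr
      omega
    obtain ⟨p₀, hp₀mem, hfiber⟩ :=
      Finset.exists_lt_card_fiber_of_mul_lt_card_of_maps_to hmaps hcard
    set S := Finset.filter (fun m => f m = p₀) (Finset.range (N - 1)) with hSdef
    have hSval : ∀ n ∈ S, n < N - 1 ∧ V n p₀.1 = W (N - 1) p₀.2 := by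
      intro n hn
      rw [hSdef, Finset.mem_filter, Finset.mem_range] at hn
      obtain ⟨hn1, hn2⟩ := hn
      have hspec := (hpair n hn1).choose_spec
      have hfn : f n = (hpair n hn1).choose := by simp only [f, dif_pos hn1]
      rw [← hfn, hn2] at hspec
      exact ⟨hn1, hspec.2.2⟩
    set M := S.card with hM
    let σemb := S.orderEmbOfFin (hM.symm)
    let σ : ℕ → ℕ := fun k => if h : k < M then σemb ⟨k, h⟩ else 0
    have hσS : ∀ k, k < M → σ k ∈ S := by
      intro k hk
      simp only [σ, dif_pos hk]
      exact Finset.orderEmbOfFin_mem _ _ _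
    have hσmono : ∀ m k, m < k → k < M → σ m < σ k := by
      intro m k hmk hk
      have hm : m < M := Nat.lt_trans hmk hk
      simp only [σ, dif_pos hm, dif_pos hk]
      exact σemb.strictMono (show (⟨m, hm⟩ : Fin M) < ⟨k, hk⟩ from hmk)
    have hp₀A : p₀.1 ∈ A := by
      rw [Finset.mem_product] at hp₀mem; exact hp₀mem.1
    have hcard' : (A.erase p₀.1).card ≤ a := by
      rw [Finset.card_erase_of_mem hp₀A]; omega
    have hM_le : M ≤ G := by
      apply ih (A.erase p₀.1) hcard' M (fun k => V (σ k)) (fun k => W (σ k))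
      · intro k hk
        have h1 := (hSval _ (hσS k hk)).1
        exact hcompat (σ k) (by omega)
      · intro m k hmk hk
        have hm : m < M := Nat.lt_trans hmk hk
        have h1 := hSval _ (hσS m hm)
        have h2 := hSval _ (hσS k hk)
        obtain ⟨i, hiA, j, hjB, hEq⟩ := hkill (σ m) (σ k) (hσmono m k hmk hk) (by omega)
        refine ⟨i, ?_, j, hjB, hEq⟩
        rw [Finset.mem_erase]
        refine ⟨?_, hiA⟩
        intro hip
        have hc := hcompat (σ k) (by omega) (i, j) hjB
        apply hc
        show V (σ k) i = W (σ k) j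
        rw [hip, h2.2, ← h1.2, ← hip, hEq]
    omega

open Classical in
noncomputable def sel (q t : ℕ) (B : Set (Fin q × Fin t)) (P : Set (Fin q → ℕ))
    (e : ℕ → Fin t → ℕ) : ℕ → Option (Fin q → ℕ)
  | n =>
    if h : (∃ V, V ∈ P ∧ BCompatible B V (e n)) ∧
        ∀ m : Fin n, ∀ V, sel q t B P e m.val = some V → ¬ BCompatible B V (e n)
    then some h.1.choose else none
termination_by n => n
decreasing_by all_goals exact Fin.isLt _

lemma sel_some {q t : ℕ} {B : Set (Fin q × Fin t)} {P : Set (Fin q → ℕ)}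
    {e : ℕ → Fin t → ℕ} {n : ℕ} {V : Fin q → ℕ} (h : sel q t B P e n = some V) :
    V ∈ P ∧ BCompatible B V (e n) ∧
      ∀ m, m < n → ∀ V', sel q t B P e m = some V' → ¬ BCompatible B V' (e n) := by
  rw [sel] at h
  split at h
  case isTrue hcond =>
    have hspec := hcond.1.choose_spec
    obtain rfl : hcond.1.choose = V := Option.some_inj.mp h
    exact ⟨hspec.1, hspec.2, fun m hm V' hsel => hcond.2 ⟨m, hm⟩ V' hsel⟩
  case isFalse => simp at h

lemma sel_none {q t : ℕ} {B : Set (Fin q × Fin t)} {P : Set (Fin q → ℕ)}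
    {e : ℕ → Fin t → ℕ} {n : ℕ} (h : sel q t B P e n = none)
    (hex : ∃ V, V ∈ P ∧ BCompatible B V (e n)) :
    ∃ m, m < n ∧ ∃ V, sel q t B P e m = some V ∧ BCompatible B V (e n) := by
  rw [sel] at h
  split at h
  case isTrue => simp at h
  case isFalse hcond =>
    push_neg at hcond
    obtain ⟨m, V, hsel, hcompat⟩ := hcond hex
    exact ⟨m.val, m.isLt, V, hsel, hcompat⟩

/-- Final numeric chain. -/
lemma gfun_final (q t : ℕ) (hq : 0 < q) (ht : 0 < t) :
    gfun (q * t) q ≤ q.factorial * 2 ^ (q * (q + 1) / 2) * t ^ (q - 1) * (t + 1) := by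
  have hqt : 1 ≤ q * t := Nat.one_le_iff_ne_zero.mpr (by positivity)
  have h1 : gfun (q * t) q ≤ (q + 1) * (q * t) ^ q := gfun_le _ hqt q
  have h3 : q ^ q ≤ q.factorial * 2 ^ (q * (q - 1) / 2) := pow_self_le q
  have h4 : t ^ q = t ^ (q - 1) * t := by
    rw [← pow_succ]
    congr 1
    omega
  have h5 : q + 1 ≤ 2 ^ q := Nat.lt_two_pow_self (n := q)
  have hexp : q + q * (q - 1) / 2 = q * (q + 1) / 2 := by
    have := tri_succ q; omega
  calc gfun (q * t) q ≤ (q + 1) * (q * t) ^ q := h1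
    _ = (q + 1) * (q ^ q * (t ^ (q - 1) * t)) := by rw [mul_pow, h4]
    _ ≤ 2 ^ q * ((q.factorial * 2 ^ (q * (q - 1) / 2)) * (t ^ (q - 1) * t)) := by gcongr
    _ = q.factorial * (2 ^ q * 2 ^ (q * (q - 1) / 2)) * t ^ (q - 1) * t := by ring
    _ = q.factorial * 2 ^ (q * (q + 1) / 2) * t ^ (q - 1) * t := by rw [← pow_add, hexp]
    _ ≤ q.factorial * 2 ^ (q * (q + 1) / 2) * t ^ (q - 1) * (t + 1) := by gcongr; omega

/-- For positive integers `q`, `t`, any `B ⊆ [q] × [t]` and any set `P` of vectors in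
`ℕ^q`, there is a subset `P* ⊆ P` of size at most `q!·2^{q(q+1)/2}·t^{q−1}·(t+1)` such
that whenever some `V ∈ P` is `B`-compatible with a vector `W ∈ ℕ^t`, some `V* ∈ P*`
is `B`-compatible with `W`. -/
theorem stmt_13 (q t : ℕ) (hq : 0 < q) (ht : 0 < t) (B : Set (Fin q × Fin t))
    (P : Set (Fin q → ℕ)) :
    ∃ Pstar ⊆ P, Pstar.Finite ∧
      Pstar.ncard ≤ Nat.factorial q * 2 ^ (q * (q + 1) / 2) * t ^ (q - 1) * (t + 1) ∧
      ∀ W : Fin t → ℕ, (∃ V ∈ P, BCompatible B V W) → ∃ Vstar ∈ Pstar, BCompatible B Vstar W := by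
  classical
  obtain ⟨e, he⟩ := exists_surjective_nat (Fin t → ℕ)
  set F := sel q t B P e with hF
  set Sel : Set ℕ := {n | ∃ V, F n = some V} with hSel
  set Pstar : Set (Fin q → ℕ) := {V | ∃ n, F n = some V} with hPstar
  have hbound : ∀ S : Finset ℕ, ↑S ⊆ Sel → S.card ≤ gfun (q * t) q := by
    intro S hSsub
    set M := S.card with hM
    let σemb := S.orderEmbOfFin (hM.symm)
    let σ : ℕ → ℕ := fun k => if h : k < M then σemb ⟨k, h⟩ else 0
    have hσS : ∀ k, k < M → σ k ∈ S := by
      intro k hk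
      simp only [σ, dif_pos hk]
      exact Finset.orderEmbOfFin_mem _ _ _
    have hσmono : ∀ m k, m < k → k < M → σ m < σ k := by
      intro m k hmk hk
      have hm : m < M := Nat.lt_trans hmk hk
      simp only [σ, dif_pos hm, dif_pos hk]
      exact σemb.strictMono (show (⟨m, hm⟩ : Fin M) < ⟨k, hk⟩ from hmk)
    have hsel : ∀ k, k < M → ∃ V, F (σ k) = some V := by
      intro k hk
      exact hSsub (hσS k hk)
    let Vf : ℕ → Fin q → ℕ := fun k =>
      if h : k < M then (hsel k h).choose else (fun _ => 0)
    apply skew_bound hq ht B q Finset.univ (by simp) M Vf (fun k => e (σ k))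
    · intro k hk
      have hspec := (hsel k hk).choose_spec
      simp only [Vf, dif_pos hk]
      exact (sel_some hspec).2.1
    · intro m k hmk hk
      have hm : m < M := Nat.lt_trans hmk hk
      have hspecm := (hsel m hm).choose_spec
      have hspeck := (hsel k hk).choose_spec
      have hnc := (sel_some hspeck).2.2 (σ m) (hσmono m k hmk hk) _ hspecm
      simp only [BCompatible] at hnc
      push_neg at hnc
      obtain ⟨p, hpB, hpeq⟩ := hnc
      refine ⟨p.1, Finset.mem_univ _, p.2, ?_, ?_⟩
      · simpa using hpB
      · simp only [Vf, dif_pos hm]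
        exact hpeq
  have hSelFin : Sel.Finite := by
    by_contra hinf
    obtain ⟨S, hsub, hcard⟩ :=
      Set.Infinite.exists_subset_card_eq hinf (gfun (q * t) q + 1)
    have := hbound S hsub
    omega
  have hSelcard : Sel.ncard ≤ gfun (q * t) q := by
    have h := hbound hSelFin.toFinset (by simp)
    rwa [Set.ncard_eq_toFinset_card Sel hSelFin]
  have himg : Pstar = (fun n => (F n).getD (fun _ => 0)) '' Sel := by
    ext V
    constructor
    · rintro ⟨n, hn⟩
      exact ⟨n, ⟨V, hn⟩, by simp [hn]⟩
    · rintro ⟨n, ⟨V', hV'⟩, rfl⟩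
      exact ⟨n, by simp [hV']⟩
  have hPfin : Pstar.Finite := by
    rw [himg]; exact hSelFin.image _
  have hPcard : Pstar.ncard ≤ gfun (q * t) q := by
    rw [himg]
    exact le_trans (Set.ncard_image_le hSelFin) hSelcard
  refine ⟨Pstar, ?_, hPfin, le_trans hPcard (gfun_final q t hq ht), ?_⟩
  · rintro V ⟨n, hn⟩
    exact (sel_some hn).1
  · rintro W ⟨V0, hV0P, hV0c⟩
    obtain ⟨n, rfl⟩ := he W
    cases hFn : F n with
    | some V => exact ⟨V, ⟨n, hFn⟩, (sel_some hFn).2.1⟩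
    | none =>
      obtain ⟨m, _, V, hVm, hVc⟩ := sel_none hFn ⟨V0, hV0P, hV0c⟩
      exact ⟨V, ⟨m, hVm⟩, hVc⟩
end

section
/- Let G be a graph with disjoint vertex sets S and T such that at most q vertices of S have a neighbor in T and at most t vertices of T have a neighbor in S. For every set F of proper colorings of G[S] there is a subset F* ⊆ F with |F*| ≤ q!·2^{q(q+1)/2}·t^{q−1}·(t+1) such that for every proper coloring h of G[T], if some g ∈ F is compatible with h, then some g* ∈ F* is compatible with h. -/
universe u

/-- `g` is a proper coloring of the subgraph of `G` induced by `S`. -/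
def ProperOn {V : Type u} (G : SimpleGraph V) (S : Set V) (g : V → ℕ) : Prop :=
  ∀ u ∈ S, ∀ v ∈ S, G.Adj u v → g u ≠ g v

/-- `(S, g)` is compatible with `(T, h)`: for every edge of `G` between `S` and `T`,
the two colorings disagree on its endpoints. -/
def ColCompatible {V : Type u} (G : SimpleGraph V) (S T : Set V) (g h : V → ℕ) : Prop :=
  ∀ u ∈ S, ∀ v ∈ T, G.Adj u v → g u ≠ h v

/-- Recursive bound for the dominating-family lemma. -/
def bnd (t : ℕ) : ℕ → ℕ
  | 0 => 1
  | (n+1) => max ((n+1)*t + 1) ((n+1)*t*((n+1)*bnd t n))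

lemma bnd_mono (t : ℕ) (ht : 0 < t) : Monotone (bnd t) := by
  apply monotone_nat_of_le_succ
  intro n
  have h1 : bnd t n ≤ (n+1)*t*((n+1)*bnd t n) := by
    calc bnd t n ≤ (n+1)*bnd t n := Nat.le_mul_of_pos_left _ (by omega)
      _ ≤ (n+1)*t*((n+1)*bnd t n) := Nat.le_mul_of_pos_left _ (by positivity)
  exact h1.trans (le_max_right _ _)

lemma tri (n : ℕ) : (n+1) + n*(n+1)/2 = (n+1)*(n+2)/2 := by
  have h1 : (n+1)*(n+2) = n*(n+1) + (n+1)*2 := by ring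
  rw [h1, Nat.add_mul_div_right _ _ (by norm_num : 0 < 2)]
  omega

lemma bnd_le (t : ℕ) (ht : 0 < t) (n : ℕ) :
    bnd t n ≤ n.factorial * 2 ^ (n*(n+1)/2) * t^(n-1) * (t+1) := by
  induction n with
  | zero => simp [bnd]
  | succ n IH =>
    rw [bnd]
    apply max_le
    · have h1 : (n+1) ≤ (n+1).factorial * 2 ^ ((n+1)*(n+2)/2) * t^n := by
        calc (n+1) ≤ (n+1).factorial := Nat.self_le_factorial _
          _ = (n+1).factorial * 1 * 1 := by ring
          _ ≤ (n+1).factorial * 2 ^ ((n+1)*(n+2)/2) * t^n := by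
              have h2 : 1 ≤ 2 ^ ((n+1)*(n+2)/2) := Nat.one_le_two_pow
              have h3 : 1 ≤ t^n := Nat.one_le_pow _ _ ht
              gcongr
      calc (n+1)*t + 1 ≤ (n+1)*(t+1) := by ring_nf; omega
        _ ≤ ((n+1).factorial * 2 ^ ((n+1)*(n+2)/2) * t^n) * (t+1) := by
            exact Nat.mul_le_mul_right _ h1
        _ = (n+1).factorial * 2 ^ ((n+1)*(n+1+1)/2) * t^(n+1-1) * (t+1) := by norm_num
    · rcases Nat.eq_zero_or_pos n with rfl | hn
      · show 1*t*(1*bnd t 0) ≤ (0+1).factorial * 2 ^ ((0+1)*(0+1+1)/2) * t^(0+1-1) * (t+1)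
        simp only [bnd]
        norm_num [Nat.factorial]
        omega
      · have h2 : t * t^(n-1) = t^n := by
          rw [← pow_succ']
          congr 1
          omega
        have h3 : (n+1) ≤ 2^(n+1) := (Nat.lt_two_pow_self (n := n+1)).le
        calc (n+1)*t*((n+1)*bnd t n)
            ≤ (n+1)*t*((n+1)*(n.factorial * 2 ^ (n*(n+1)/2) * t^(n-1) * (t+1))) := by
              apply Nat.mul_le_mul_left
              exact Nat.mul_le_mul_left _ IH
          _ = ((n+1)*n.factorial) * ((n+1) * 2^(n*(n+1)/2)) * (t * t^(n-1)) * (t+1) := by ring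
          _ ≤ ((n+1)*n.factorial) * (2^(n+1) * 2^(n*(n+1)/2)) * (t * t^(n-1)) * (t+1) := by
              have := Nat.mul_le_mul_right (2^(n*(n+1)/2)) h3
              exact Nat.mul_le_mul_right _ (Nat.mul_le_mul_right _ (Nat.mul_le_mul_left _ this))
          _ = (n+1).factorial * 2^((n+1)*(n+1+1)/2) * t^(n+1-1) * (t+1) := by
              rw [← pow_add, tri, h2, ← Nat.factorial_succ]
              norm_num

/-- Abstract dominating-family lemma: for any family `F` of tuples and any set `B` of
coordinates, there is a subfamily of size `bnd t |B|` dominating `F` against all families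
of forbidden lists of size at most `t` per coordinate. -/
lemma key {ι : Type u} (t : ℕ) :
    ∀ (n : ℕ) (B : Finset ι) (F : Set (ι → ℕ)), B.card = n →
    ∃ Fstar : Finset (ι → ℕ), ↑Fstar ⊆ F ∧ Fstar.card ≤ bnd t n ∧
      ∀ L : ι → Finset ℕ, (∀ i, (L i).card ≤ t) →
        (∃ g ∈ F, ∀ i ∈ B, g i ∉ L i) → ∃ g ∈ Fstar, ∀ i ∈ B, g i ∉ L i := by
  classical
  intro n
  induction n with
  | zero =>
    intro B F hB
    rcases F.eq_empty_or_nonempty with rfl | ⟨g0, hg0⟩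
    · refine ⟨∅, by simp, by simp [bnd], ?_⟩
      rintro L hL ⟨g, hg, -⟩
      exact absurd hg (by simp)
    · refine ⟨{g0}, by simpa, by simp [bnd], ?_⟩
      intro L hL _
      refine ⟨g0, by simp, ?_⟩
      intro i hi
      rw [Finset.card_eq_zero.mp hB] at hi
      exact absurd hi (Finset.notMem_empty i)
  | succ n IH =>
    intro B F hB
    by_cases hM : ∃ M : Finset (ι → ℕ), ↑M ⊆ F ∧
        (∀ g ∈ M, ∀ g' ∈ M, g ≠ g' → ∀ i ∈ B, g i ≠ g' i) ∧ M.card = (n+1)*t + 1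
    · obtain ⟨M, hMF, hscat, hcard⟩ := hM
      refine ⟨M, hMF, by rw [hcard, bnd]; exact le_max_left _ _, ?_⟩
      intro L hL _
      have hcount : ∀ i ∈ B, (M.filter (fun g => g i ∈ L i)).card ≤ t := by
        intro i hiB
        calc (M.filter (fun g => g i ∈ L i)).card ≤ (L i).card := by
              apply Finset.card_le_card_of_injOn (fun g => g i)
              · intro g hg; exact (Finset.mem_filter.mp hg).2
              · intro g hg g' hg' hgg'
                by_contra hne
                exact hscat g (Finset.mem_filter.mp (by exact_mod_cast hg)).1 g'
                  (Finset.mem_filter.mp (by exact_mod_cast hg')).1 hne i hiB hgg'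
          _ ≤ t := hL i
      have hsub : M.filter (fun g => ∃ i ∈ B, g i ∈ L i) ⊆
          B.biUnion (fun i => M.filter (fun g => g i ∈ L i)) := by
        intro g hg
        simp only [Finset.mem_filter] at hg
        obtain ⟨hgM, i, hiB, hgi⟩ := hg
        exact Finset.mem_biUnion.mpr ⟨i, hiB, Finset.mem_filter.mpr ⟨hgM, hgi⟩⟩
      have hKcard : (M.filter (fun g => ∃ i ∈ B, g i ∈ L i)).card ≤ (n+1)*t := by
        calc (M.filter (fun g => ∃ i ∈ B, g i ∈ L i)).card
            ≤ (B.biUnion fun i => M.filter (fun g => g i ∈ L i)).card :=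
              Finset.card_le_card hsub
          _ ≤ ∑ i ∈ B, (M.filter (fun g => g i ∈ L i)).card := Finset.card_biUnion_le
          _ ≤ ∑ i ∈ B, t := Finset.sum_le_sum hcount
          _ = (n+1)*t := by rw [Finset.sum_const, hB, smul_eq_mul]
      have hexg : ∃ g ∈ M, ¬ ∃ i ∈ B, g i ∈ L i := by
        by_contra hall
        push_neg at hall
        have heq : M.filter (fun g => ∃ i ∈ B, g i ∈ L i) = M :=
          Finset.filter_eq_self.mpr (by intro g hg; exact hall g hg)
        rw [heq, hcard] at hKcard
        omega
      obtain ⟨g, hgM, hg⟩ := hexg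
      push_neg at hg
      exact ⟨g, hgM, hg⟩
    · push_neg at hM
      have hBound : ∀ M : Finset (ι → ℕ), ↑M ⊆ F →
          (∀ g ∈ M, ∀ g' ∈ M, g ≠ g' → ∀ i ∈ B, g i ≠ g' i) → M.card ≤ (n+1)*t := by
        intro M hMF hscat
        by_contra hc
        push_neg at hc
        obtain ⟨M', hM'sub, hM'card⟩ := Finset.exists_subset_card_eq hc
        refine hM M' (fun x hx => hMF (hM'sub (by exact_mod_cast hx)))
          (fun g hg g' hg' hne i hi => hscat g (hM'sub hg) g' (hM'sub hg') hne i hi) hM'card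
      set P : ℕ → Prop := fun k => ∃ M : Finset (ι → ℕ), ↑M ⊆ F ∧
          (∀ g ∈ M, ∀ g' ∈ M, g ≠ g' → ∀ i ∈ B, g i ≠ g' i) ∧ M.card = k with hP
      have hP0 : P 0 := ⟨∅, by simp, by simp, rfl⟩
      have k0spec : P (Nat.findGreatest P ((n+1)*t)) :=
        Nat.findGreatest_spec (Nat.zero_le _) hP0
      obtain ⟨M, hMF, hscat, hMcard⟩ := k0spec
      have hcover : ∀ g ∈ F, ∃ m ∈ M, ∃ i ∈ B, g i = m i := by
        intro g hgF
        by_contra hc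
        push_neg at hc
        have hgM : g ∉ M := by
          intro hgM
          obtain ⟨i, hiB⟩ := Finset.card_pos.mp (by omega : 0 < B.card)
          exact hc g hgM i hiB rfl
        have hins : P (M.card + 1) := by
          refine ⟨insert g M, ?_, ?_, ?_⟩
          · intro x hx
            rcases Finset.mem_insert.mp (by exact_mod_cast hx) with rfl | hx'
            · exact hgF
            · exact hMF hx'
          · intro a ha b hb hab i hiB
            rcases Finset.mem_insert.mp ha with rfl | ha' <;>
              rcases Finset.mem_insert.mp hb with rfl | hb'
            · exact absurd rfl hab
            · exact hc b hb' i hiB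
            · exact fun e => hc a ha' i hiB e.symm
            · exact hscat a ha' b hb' hab i hiB
          · rw [Finset.card_insert_of_notMem hgM]
        have hins' := hins
        obtain ⟨M'', h1, h2, h3⟩ := hins'
        have hle' := hBound M'' h1 h2
        have hle : M.card + 1 ≤ (n+1)*t := by omega
        exact Nat.findGreatest_is_greatest (by omega) hle hins
      have H : ∀ (m : ι → ℕ) (i : ι), ∃ Fs : Finset (ι → ℕ),
          ↑Fs ⊆ {g ∈ F | g i = m i} ∧ Fs.card ≤ bnd t n ∧
          (i ∈ B → ∀ L : ι → Finset ℕ, (∀ j, (L j).card ≤ t) →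
            (∃ g ∈ {g ∈ F | g i = m i}, ∀ j ∈ B.erase i, g j ∉ L j) →
            ∃ g ∈ Fs, ∀ j ∈ B.erase i, g j ∉ L j) := by
        intro m i
        by_cases hiB : i ∈ B
        · obtain ⟨Fs, h1, h2, h3⟩ := IH (B.erase i) {g ∈ F | g i = m i}
            (by rw [Finset.card_erase_of_mem hiB, hB]; omega)
          exact ⟨Fs, h1, h2, fun _ => h3⟩
        · exact ⟨∅, by simp, by simp, fun h => absurd h hiB⟩
      choose Fs hFs1 hFs2 hFs3 using H
      refine ⟨(M ×ˢ B).biUnion (fun p => Fs p.1 p.2), ?_, ?_, ?_⟩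
      · intro g hg
        obtain ⟨p, hp, hgp⟩ := Finset.mem_biUnion.mp (by exact_mod_cast hg)
        exact (hFs1 p.1 p.2 hgp).1
      · calc ((M ×ˢ B).biUnion fun p => Fs p.1 p.2).card
            ≤ ∑ p ∈ M ×ˢ B, (Fs p.1 p.2).card := Finset.card_biUnion_le
          _ ≤ ∑ _p ∈ M ×ˢ B, bnd t n := Finset.sum_le_sum (fun p _ => hFs2 p.1 p.2)
          _ = M.card * ((n+1) * bnd t n) := by
              rw [Finset.sum_const, Finset.card_product, hB, smul_eq_mul]; ring
          _ ≤ ((n+1)*t) * ((n+1) * bnd t n) := by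
              apply Nat.mul_le_mul_right
              exact hMcard ▸ Nat.findGreatest_le _
          _ ≤ bnd t (n+1) := by rw [bnd]; exact le_max_right _ _
      · rintro L hL ⟨g, hgF, hg⟩
        obtain ⟨m, hmM, i, hiB, hgi⟩ := hcover g hgF
        obtain ⟨gs, hgs, hgsc⟩ := hFs3 m i hiB L hL
          ⟨g, ⟨hgF, hgi⟩, fun j hj => hg j (Finset.mem_of_mem_erase hj)⟩
        refine ⟨gs, Finset.mem_biUnion.mpr ⟨(m, i), Finset.mem_product.mpr ⟨hmM, hiB⟩, hgs⟩, ?_⟩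
        intro j hjB
        by_cases hji : j = i
        · subst hji
          have hmem : gs ∈ {g ∈ F | g j = m j} := hFs1 m j (by exact_mod_cast hgs)
          have : gs j = m j := hmem.2
          rw [this, ← hgi]
          exact hg j hjB
        · exact hgsc j (Finset.mem_erase.mpr ⟨hji, hjB⟩)

/-- Let `S`, `T` be disjoint vertex sets of `G` with at most `q` vertices of `S` having
a neighbour in `T` and at most `t` vertices of `T` having a neighbour in `S`. For every
set `F` of proper colorings of `G[S]` there is `F* ⊆ F` with
`|F*| ≤ q!·2^{q(q+1)/2}·t^{q−1}·(t+1)` such that any proper coloring of `G[T]`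
compatible with some member of `F` is compatible with some member of `F*`. -/
theorem stmt_14 {V : Type u} [Fintype V] (G : SimpleGraph V) (S T : Set V)
    (hST : Disjoint S T) (q t : ℕ) (hq : 0 < q) (ht : 0 < t)
    (hSq : {v | v ∈ S ∧ ∃ u ∈ T, G.Adj v u}.ncard ≤ q)
    (hTt : {v | v ∈ T ∧ ∃ u ∈ S, G.Adj v u}.ncard ≤ t)
    (F : Set (V → ℕ)) (hF : ∀ g ∈ F, ProperOn G S g) :
    ∃ Fstar ⊆ F, Fstar.Finite ∧
      Fstar.ncard ≤ Nat.factorial q * 2 ^ (q * (q + 1) / 2) * t ^ (q - 1) * (t + 1) ∧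
      ∀ h : V → ℕ, ProperOn G T h → (∃ g ∈ F, ColCompatible G S T g h) →
        ∃ gstar ∈ Fstar, ColCompatible G S T gstar h := by
  classical
  have hBfin : {v | v ∈ S ∧ ∃ u ∈ T, G.Adj v u}.Finite := Set.toFinite _
  set B : Finset V := hBfin.toFinset with hBdef
  have hBcard : B.card ≤ q := by
    rw [← Set.ncard_eq_toFinset_card _ hBfin]
    exact hSq
  have hmemB : ∀ v, v ∈ B ↔ v ∈ S ∧ ∃ u ∈ T, G.Adj v u := fun v => hBfin.mem_toFinset
  -- lists
  set L0 : (V → ℕ) → V → Finset ℕ := fun h v =>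
    if v ∈ B then (Finset.univ.filter (fun u => u ∈ T ∧ G.Adj v u)).image h else ∅ with hL0
  have hTbfin : {u | u ∈ T ∧ ∃ w ∈ S, G.Adj u w}.Finite := Set.toFinite _
  have hLcard : ∀ (h : V → ℕ) (v : V), (L0 h v).card ≤ t := by
    intro h v
    rw [hL0]
    by_cases hv : v ∈ B
    · simp only [hv, if_true]
      calc ((Finset.univ.filter (fun u => u ∈ T ∧ G.Adj v u)).image h).card
          ≤ (Finset.univ.filter (fun u => u ∈ T ∧ G.Adj v u)).card :=
            Finset.card_image_le
        _ ≤ hTbfin.toFinset.card := by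
            apply Finset.card_le_card
            intro u hu
            simp only [Finset.mem_filter] at hu
            rw [hTbfin.mem_toFinset]
            exact ⟨hu.2.1, v, ((hmemB v).mp hv).1, hu.2.2.symm⟩
        _ ≤ t := by rw [← Set.ncard_eq_toFinset_card _ hTbfin]; exact hTt
    · simp [hv]
  have hcompat : ∀ (g h : V → ℕ), ColCompatible G S T g h ↔ ∀ v ∈ B, g v ∉ L0 h v := by
    intro g h
    constructor
    · intro hc v hvB
      have hLv : L0 h v = (Finset.univ.filter (fun u => u ∈ T ∧ G.Adj v u)).image h := by
        rw [hL0]; simp [hvB]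
      rw [hLv]
      intro hmem
      obtain ⟨u, hu, heq⟩ := Finset.mem_image.mp hmem
      obtain ⟨-, huT, hadj⟩ := Finset.mem_filter.mp hu
      exact hc v ((hmemB v).mp hvB).1 u huT hadj heq.symm
    · intro hc u huS w hwT hadj heq
      have huB : u ∈ B := (hmemB u).mpr ⟨huS, w, hwT, hadj⟩
      apply hc u huB
      have hLu : L0 h u = (Finset.univ.filter (fun x => x ∈ T ∧ G.Adj u x)).image h := by
        rw [hL0]; simp [huB]
      rw [hLu]
      exact Finset.mem_image.mpr ⟨w, Finset.mem_filter.mpr ⟨Finset.mem_univ _, hwT, hadj⟩, heq.symm⟩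
  obtain ⟨Fstar, hsub, hcard, hprop⟩ := key t B.card B F rfl
  refine ⟨↑Fstar, hsub, Fstar.finite_toSet, ?_, ?_⟩
  · rw [Set.ncard_coe_finset]
    calc Fstar.card ≤ bnd t B.card := hcard
      _ ≤ bnd t q := bnd_mono t ht hBcard
      _ ≤ Nat.factorial q * 2 ^ (q * (q + 1) / 2) * t ^ (q - 1) * (t + 1) := bnd_le t ht q
  · rintro h hProper ⟨g, hgF, hgc⟩
    obtain ⟨gs, hgs, hgsc⟩ := hprop (L0 h) (hLcard h) ⟨g, hgF, (hcompat g h).mp hgc⟩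
    exact ⟨gs, hgs, (hcompat gs h).mpr hgsc⟩
end

section
/- Let G be a graph admitting a tree-cut decomposition (T, {X_t}) with thickness at most α and crossing number at most k, and let S ⊆ V(G) with |S| ≥ α+1 and |δ_G(S, V(G)∖S)| ≤ 2α²+4k. With γ_S(v) = |δ_G({v}, V(G)∖S)| for v ∈ S, the induced graph G[S] admits a tree-cut decomposition (T', {X'_t}) where T' is a star with center t_c and at least one leaf, |X'_{t_c}| ≤ α, cross(t_c) ≤ k, every leaf bag X'_q satisfies γ_S(X'_q) ≤ α²+2k and |δ_{G[S]}(X'_q, X'_{t_c})| ≤ α²+k, and no leaf bag equals all of S. -/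
open SimpleGraph

universe u

/-- The set of edges of `G'` with one endpoint in `A` and one in `B`. -/
def edgesBetween {W : Type*} (G' : SimpleGraph W) (A B : Set W) : Set (Sym2 W) :=
  {e | e ∈ G'.edgeSet ∧ ∃ u ∈ A, ∃ w ∈ B, e = s(u, w)}


open SimpleGraph

namespace TreeAux

variable {β : Type*} {T : SimpleGraph β}

lemma reachable_induce_of_walk {s : Set β} {u v : β} (p : T.Walk u v)
    (hp : ∀ x ∈ p.support, x ∈ s) (hu : u ∈ s) (hv : v ∈ s) :
    (T.induce s).Reachable ⟨u, hu⟩ ⟨v, hv⟩ := by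
  induction p with
  | nil => rfl
  | @cons a b c h q ih =>
      have hb : b ∈ s := hp b (by simp)
      have : (T.induce s).Adj ⟨a, hu⟩ ⟨b, hb⟩ := by
        simpa using h
      exact this.reachable.trans (ih (fun x hx => hp x (by simp [hx])) hb hv)

lemma walk_avoid_of_reachable_induce {s : Set β} {a b : ↥s}
    (h : (T.induce s).Reachable a b) : ∃ p : T.Walk ↑a ↑b, ∀ x ∈ p.support, x ∈ s := by
  obtain ⟨w⟩ := h
  induction w with
  | nil =>
      exact ⟨SimpleGraph.Walk.nil, by
        intro x hx; simp at hx; subst hx; exact Subtype.coe_prop _⟩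
  | @cons a' b' c' h q ih =>
      obtain ⟨p, hp⟩ := ih
      refine ⟨SimpleGraph.Walk.cons (by simpa using h) p, ?_⟩
      intro x hx
      rcases (SimpleGraph.Walk.mem_support_iff _).mp hx with rfl | hx'
      · exact Subtype.coe_prop a'
      · exact hp x (by simpa using hx')

/-- Decompose a path to `t` as a walk to a neighbour `r` of `t`, avoiding `t`. -/
lemma exists_escape_of_path {t b : β} (p : T.Walk b t) (hp : p.IsPath) (hbt : b ≠ t) :
    ∃ (r : β) (_ : T.Adj r t) (q : T.Walk b r), t ∉ q.support ∧ r ∈ p.support := by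
  obtain ⟨x, h, q, hq⟩ := SimpleGraph.Walk.exists_eq_cons_of_ne (Ne.symm hbt) p.reverse
  have hrev : p = (SimpleGraph.Walk.cons h q).reverse := by
    rw [← hq, SimpleGraph.Walk.reverse_reverse]
  have hpath : (SimpleGraph.Walk.cons h q).IsPath := by rw [← hq]; exact hp.reverse
  have htq : t ∉ q.support := by
    rcases (SimpleGraph.Walk.cons_isPath_iff h q).mp hpath with ⟨_, ht⟩
    exact ht
  refine ⟨x, h.symm, q.reverse, by simpa using htq, ?_⟩
  have : x ∈ (SimpleGraph.Walk.cons h q).reverse.support := by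
    simp [SimpleGraph.Walk.support_reverse]
  rwa [← hrev] at this

lemma concat_isPath {u v t : β} {p : T.Walk u v} (hp : p.IsPath) (h : T.Adj v t)
    (ht : t ∉ p.support) : (p.concat h).IsPath := by
  rw [← SimpleGraph.Walk.isPath_reverse_iff, SimpleGraph.Walk.reverse_concat]
  exact hp.reverse.cons (by simpa using ht)

/-- In an acyclic graph, the neighbour of `t` reachable from `b` avoiding `t` is unique. -/
lemma escape_unique (hA : T.IsAcyclic) {t b r₁ r₂ : β}
    (h₁ : T.Adj r₁ t) (h₂ : T.Adj r₂ t)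
    (p : T.Walk b r₁) (hp : t ∉ p.support)
    (q : T.Walk b r₂) (hq : t ∉ q.support) : r₁ = r₂ := by
  classical
  have hu := SimpleGraph.isAcyclic_iff_path_unique.mp hA
  set w := (p.reverse.append q).bypass with hw
  have hwsup : t ∉ w.support := by
    intro hmem
    have := SimpleGraph.Walk.support_bypass_subset _ hmem
    rcases (SimpleGraph.Walk.mem_support_append_iff _ _).mp this with h' | h'
    · exact hp (by simpa [SimpleGraph.Walk.support_reverse] using h')
    · exact hq h'
  have hwpath : w.IsPath := SimpleGraph.Walk.bypass_isPath _
  have hP2 : (w.concat h₂).IsPath := concat_isPath hwpath h₂ hwsup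
  have hP1 : (SimpleGraph.Walk.cons h₁ SimpleGraph.Walk.nil : T.Walk r₁ t).IsPath := by
    simp [h₁.ne]
  have := hu ⟨_, hP1⟩ ⟨_, hP2⟩
  have hlen : (SimpleGraph.Walk.cons h₁ (SimpleGraph.Walk.nil : T.Walk t t)).length
      = (w.concat h₂).length := by
    exact congrArg SimpleGraph.Walk.length (congrArg Subtype.val this)
  rw [SimpleGraph.Walk.length_concat, SimpleGraph.Walk.length_cons,
    SimpleGraph.Walk.length_nil] at hlen
  exact SimpleGraph.Walk.eq_of_length_eq_zero (p := w) (by omega)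

/-- In a connected graph, from any `b ≠ c` there is a neighbour `r` of `c`
reachable from `b` by a walk avoiding `c`. -/
lemma exists_escape (hconn : T.Connected) {c b : β} (hb : b ≠ c) :
    ∃ r, T.Adj r c ∧ ∃ p : T.Walk b r, c ∉ p.support := by
  classical
  obtain ⟨w⟩ := hconn.preconnected b c
  obtain ⟨r, hadj, q, hq, _⟩ := exists_escape_of_path w.toPath.1 w.toPath.2 hb
  exact ⟨r, hadj, q, hq⟩

/-- Every walk from `b` to `t` must pass through the escape neighbour of `b`. -/
lemma mem_support_of_walk_to_center (hA : T.IsAcyclic) {t b r : β} (hb : b ≠ t)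
    (hrt : T.Adj r t) (cert : ∃ p : T.Walk b r, t ∉ p.support) (w : T.Walk b t) :
    r ∈ w.support := by
  classical
  obtain ⟨p, hp⟩ := cert
  have hbp : w.bypass.IsPath := SimpleGraph.Walk.bypass_isPath w
  obtain ⟨r', hadj', q', hq', hr'⟩ := exists_escape_of_path w.bypass hbp hb
  have : r = r' := escape_unique hA hrt hadj' p hp q' hq'
  subst this
  exact SimpleGraph.Walk.support_bypass_subset w hr'

/-- If the escape neighbour of `b` (towards `t`) is not `r`, then `t` is closer to `b`
than `r` is, for `r` a neighbour of `t`. -/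
lemma dist_lt_of_escape_ne (hT : T.IsTree) {t b r rb : β} (hb : b ≠ t)
    (hrt : T.Adj r t) (hrbt : T.Adj rb t)
    (cert : ∃ p : T.Walk b rb, t ∉ p.support) (hne : rb ≠ r) :
    T.dist b t < T.dist b r := by
  classical
  obtain ⟨w, hw⟩ := hT.isConnected.exists_walk_length_eq_dist b r
  set q := w.bypass with hqdef
  have hqlen : q.length ≤ T.dist b r := hw ▸ SimpleGraph.Walk.length_bypass_le w
  by_cases ht : t ∈ q.support
  · have h1 : T.dist b t ≤ (q.takeUntil t ht).length := SimpleGraph.dist_le _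
    have h2 : (q.takeUntil t ht).length + (q.dropUntil t ht).length = q.length := by
      have := congrArg SimpleGraph.Walk.length (q.take_spec ht)
      rwa [SimpleGraph.Walk.length_append] at this
    have h3 : (q.dropUntil t ht).length ≠ 0 := by
      intro h0
      exact hrt.ne (SimpleGraph.Walk.eq_of_length_eq_zero h0).symm
    omega
  · obtain ⟨p, hp⟩ := cert
    exact absurd (escape_unique hT.IsAcyclic hrbt hrt p hp q ht) hne

open Classical in
/-- In a finite tree with vertex weights, there is a node `t` such that every connected
component of `T - t` carries at most half the total weight. -/
lemma exists_centroid {β : Type*} [Fintype β] {T : SimpleGraph β} (hT : T.IsTree) (W : β → ℕ) :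
    ∃ t : β, ∀ (b₀ : β) (h₀ : b₀ ≠ t),
      2 * ∑ b ∈ Finset.univ.filter
            (fun b => ∃ h : b ≠ t, (T.induce {x | x ≠ t}).Reachable ⟨b, h⟩ ⟨b₀, h₀⟩), W b
        ≤ ∑ b, W b := by
  have hconn := hT.isConnected
  have : Nonempty β := hconn.nonempty
  obtain ⟨t, -, hmin⟩ := Finset.exists_min_image Finset.univ
    (fun c => ∑ b, W b * T.dist b c) ⟨Classical.arbitrary β, Finset.mem_univ _⟩
  refine ⟨t, ?_⟩
  intro b₀ h₀
  -- escape data towards t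
  have esc : ∀ b : β, b ≠ t → ∃ r, T.Adj r t ∧ ∃ p : T.Walk b r, t ∉ p.support :=
    fun b hb => exists_escape hconn hb
  obtain ⟨r₀, hr₀t, p₀, hp₀⟩ := esc b₀ h₀
  have hr₀ne : r₀ ≠ t := hr₀t.ne
  set F := Finset.univ.filter
    (fun b => ∃ h : b ≠ t, (T.induce {x | x ≠ t}).Reachable ⟨b, h⟩ ⟨b₀, h₀⟩) with hF
  -- every member of F has escape neighbour r₀
  have hFesc : ∀ b ∈ F, b ≠ t ∧ ∃ p : T.Walk b r₀, t ∉ p.support := by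
    intro b hb
    rw [hF, Finset.mem_filter] at hb
    obtain ⟨-, hbt, hreach⟩ := hb
    obtain ⟨w, hw⟩ := walk_avoid_of_reachable_induce hreach
    refine ⟨hbt, w.append p₀, ?_⟩
    intro hmem
    rcases (SimpleGraph.Walk.mem_support_append_iff _ _).mp hmem with h' | h'
    · exact (hw t h') rfl
    · exact hp₀ h'
  -- key distance fact on F : dist b r₀ < dist b t
  have hFdist : ∀ b ∈ F, T.dist b r₀ + 1 ≤ T.dist b t := by
    intro b hb
    obtain ⟨hbt, certb⟩ := hFesc b hb
    by_cases hbr : b = r₀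
    · subst hbr
      have : T.dist b t ≠ 0 := fun h => hbt (hconn.dist_eq_zero_iff.mp h)
      simpa [SimpleGraph.dist_self] using Nat.one_le_iff_ne_zero.mpr this
    · -- escape from b towards r₀
      obtain ⟨r', hr't, q', hq'⟩ := exists_escape hconn (c := r₀) hbr
      have hr'ne : r' ≠ t := by
        intro h
        subst h
        exact hq' (mem_support_of_walk_to_center hT.IsAcyclic hbt hr₀t certb q')
      have := dist_lt_of_escape_ne hT (t := r₀) (r := t) hbr hr₀t.symm hr't
        ⟨q', hq'⟩ hr'ne
      omega
  -- triangle inequality everywhere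
  have htri : ∀ b, T.dist b r₀ ≤ T.dist b t + 1 := by
    intro b
    calc T.dist b r₀ ≤ T.dist b t + T.dist t r₀ := hconn.dist_triangle
    _ ≤ T.dist b t + 1 := by
        have : T.dist t r₀ ≤ 1 := SimpleGraph.dist_le
          (SimpleGraph.Walk.cons hr₀t.symm SimpleGraph.Walk.nil)
        omega
  -- compare costs
  have hcost := hmin r₀ (Finset.mem_univ r₀)
  rw [← Finset.sum_filter_add_sum_filter_not Finset.univ
      (fun b => b ∈ F) (fun b => W b * T.dist b t),
    ← Finset.sum_filter_add_sum_filter_not Finset.univ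
      (fun b => b ∈ F) (fun b => W b * T.dist b r₀)] at hcost
  have hFF : Finset.univ.filter (fun b => b ∈ F) = F := by
    simp [Finset.filter_mem_eq_inter]
  rw [hFF] at hcost
  have S1 : ∑ b ∈ F, W b * T.dist b r₀ + ∑ b ∈ F, W b ≤ ∑ b ∈ F, W b * T.dist b t := by
    rw [← Finset.sum_add_distrib]
    refine Finset.sum_le_sum ?_
    intro b hb
    have := hFdist b hb
    calc W b * T.dist b r₀ + W b = W b * (T.dist b r₀ + 1) := by ring
    _ ≤ W b * T.dist b t := Nat.mul_le_mul_left _ this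
  have S2 : ∑ b ∈ Finset.univ.filter (fun b => b ∉ F), W b * T.dist b r₀
      ≤ ∑ b ∈ Finset.univ.filter (fun b => b ∉ F), (W b * T.dist b t + W b) := by
    refine Finset.sum_le_sum ?_
    intro b _
    have := htri b
    calc W b * T.dist b r₀ ≤ W b * (T.dist b t + 1) := Nat.mul_le_mul_left _ this
    _ = W b * T.dist b t + W b := by ring
  rw [Finset.sum_add_distrib] at S2
  have hsplit := Finset.sum_filter_add_sum_filter_not Finset.univ (fun b => b ∈ F) W
  rw [hFF] at hsplit
  omega

end TreeAux

open SimpleGraph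

/-- The star graph on `Option L` with centre `none`. -/
def starGraph (L : Type*) : SimpleGraph (Option L) where
  Adj a b := a ≠ b ∧ (a = none ∨ b = none)
  symm := by constructor; intro a b h; exact ⟨h.1.symm, h.2.symm⟩
  loopless := by constructor; intro a h; exact h.1 rfl

namespace starGraph
variable {L : Type*}

lemma adj_iff {a b : Option L} : (_root_.starGraph L).Adj a b ↔ a ≠ b ∧ (a = none ∨ b = none) :=
  Iff.rfl

lemma walk_none_free_nil {a b : Option L} (w : (_root_.starGraph L).Walk a b) (ha : a ≠ none)
    (hnone : none ∉ w.support) : w.length = 0 := by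
  cases w with
  | nil => rfl
  | cons h w' =>
      exfalso
      rcases h.2 with h' | h'
      · exact ha h'
      · subst h'
        exact hnone (by simp)

lemma isTree : (_root_.starGraph L).IsTree := by
  constructor
  · -- connected
    have hpre : (_root_.starGraph L).Preconnected := by
      have hto : ∀ a : Option L, (_root_.starGraph L).Reachable a none := by
        intro a
        by_cases h : a = none
        · subst h; rfl
        · exact (Adj.reachable ⟨h, Or.inr rfl⟩)
      intro a b
      exact (hto a).trans (hto b).symm
    exact ⟨hpre⟩
  · -- acyclic
    intro v c hc
    have hlen := hc.three_le_length
    cases c with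
    | nil => simp at hlen
    | @cons _ x _ h₁ p =>
      cases p with
      | nil => simp at hlen
      | @cons _ y _ h₂ p₂ =>
        have hnodup : (x :: p₂.support).Nodup := by
          have := hc.support_nodup
          simpa using this
        have hxp : x ∉ p₂.support := (List.nodup_cons.mp hnodup).1
        have hp₂nodup : p₂.support.Nodup := (List.nodup_cons.mp hnodup).2
        rcases h₁.2 with hv | hx
        · -- v = none, hence x ≠ none, hence y = none = v, so p₂ is a nil loop
          have hxne : x ≠ none := by rw [← hv]; exact h₁.1.symm
          have hy : y = none := by
            rcases h₂.2 with h' | h'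
            · exact absurd h' hxne
            · exact h'
          have hyv : y = v := by rw [hy, hv]
          subst hyv
          have : p₂.IsPath := (SimpleGraph.Walk.isPath_def _).mpr hp₂nodup
          have hnil : p₂ = SimpleGraph.Walk.nil := by
            simpa using this
          subst hnil
          simp at hlen
        · -- x = none : the rest of the walk cannot continue without revisiting none
          subst hx
          have hyne : y ≠ none := fun h => h₂.1 (by rw [h])
          have hnone : (none : Option L) ∉ p₂.support := hxp
          have hlen0 := walk_none_free_nil p₂ hyne hnone
          have hyv : y = v := SimpleGraph.Walk.eq_of_length_eq_zero hlen0
          subst hyv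
          have hnil : p₂ = SimpleGraph.Walk.nil := by
            simpa using (SimpleGraph.Walk.isPath_def _).mpr hp₂nodup
          subst hnil
          simp at hlen

end starGraph


lemma ncard_prod_eq {X Y : Type*} [Fintype X] [Fintype Y] (A : Set X) (B : Set Y) :
    (A ×ˢ B).ncard = A.ncard * B.ncard := by
  classical
  rw [Set.ncard_eq_toFinset_card' (A ×ˢ B), Set.ncard_eq_toFinset_card' A,
    Set.ncard_eq_toFinset_card' B, Set.toFinset_prod, Finset.card_product]

open Classical in
lemma sum_gamma_le {V : Type u} [Fintype V] (G : SimpleGraph V) (S : Set V) :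
    ∑ v ∈ S.toFinite.toFinset, {w : V | w ∉ S ∧ G.Adj v w}.ncard
      ≤ (edgesBetween G S Sᶜ).ncard := by
  classical
  set Nv : V → Finset V := fun v => {w : V | w ∉ S ∧ G.Adj v w}.toFinite.toFinset with hNv
  have hgS : ∀ v : V, {w : V | w ∉ S ∧ G.Adj v w}.ncard = (Nv v).card := fun v =>
    Set.ncard_eq_toFinset_card _ _
  have hNS : ∀ v w, w ∈ Nv v ↔ (w ∉ S ∧ G.Adj v w) := by
    intro v w; rw [hNv]; simp [Set.Finite.mem_toFinset]
  have hdisj : ∀ v ∈ S.toFinite.toFinset, ∀ v' ∈ S.toFinite.toFinset, v ≠ v' →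
      Disjoint ((Nv v).image (fun w => s(v, w))) ((Nv v').image (fun w => s(v', w))) := by
    intro v hv v' hv' hne
    rw [Finset.disjoint_left]
    intro e he he'
    obtain ⟨w, hw, rfl⟩ := Finset.mem_image.mp he
    obtain ⟨w', hw', heq⟩ := Finset.mem_image.mp he'
    rw [Sym2.eq_iff] at heq
    rcases heq with ⟨h1, h2⟩ | ⟨h1, h2⟩
    · exact hne h1.symm
    · have : w' ∉ S := ((hNS v' w').mp hw').1
      exact this (h2 ▸ (Set.Finite.mem_toFinset _).mp hv)
  have hcard : (S.toFinite.toFinset.biUnion (fun v => (Nv v).image (fun w => s(v, w)))).card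
      = ∑ v ∈ S.toFinite.toFinset, (Nv v).card := by
    rw [Finset.card_biUnion hdisj]
    refine Finset.sum_congr rfl ?_
    intro v hv
    refine Finset.card_image_of_injOn ?_
    intro w hw w' hw' heq
    simp only [Sym2.eq_iff] at heq
    rcases heq with ⟨-, h⟩ | ⟨h1, h2⟩
    · exact h
    · exfalso
      have : w' ∉ S := ((hNS v w').mp (by simpa using hw')).1
      exact this (h1 ▸ (Set.Finite.mem_toFinset _).mp hv)
  have hsub : (S.toFinite.toFinset.biUnion (fun v => (Nv v).image (fun w => s(v, w))))
      ⊆ (edgesBetween G S Sᶜ).toFinite.toFinset := by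
    intro e he
    obtain ⟨v, hv, he⟩ := Finset.mem_biUnion.mp he
    obtain ⟨w, hw, rfl⟩ := Finset.mem_image.mp he
    obtain ⟨hwS, hadj⟩ := (hNS v w).mp hw
    rw [Set.Finite.mem_toFinset]
    exact ⟨G.mem_edgeSet.mpr hadj, v, (Set.Finite.mem_toFinset _).mp hv, w, hwS, rfl⟩
  calc ∑ v ∈ S.toFinite.toFinset, {w : V | w ∉ S ∧ G.Adj v w}.ncard
      = ∑ v ∈ S.toFinite.toFinset, (Nv v).card := Finset.sum_congr rfl (fun v _ => hgS v)
    _ = (S.toFinite.toFinset.biUnion (fun v => (Nv v).image (fun w => s(v, w)))).card :=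
        hcard.symm
    _ ≤ (edgesBetween G S Sᶜ).toFinite.toFinset.card := Finset.card_le_card hsub
    _ = (edgesBetween G S Sᶜ).ncard := (Set.ncard_eq_toFinset_card _ _).symm

lemma ncard_coe_le {V : Type u} {S : Set V} [Fintype V] (A : Set ↥S) (B : Set V)
    (h : ∀ v ∈ A, ↑v ∈ B) : A.ncard ≤ B.ncard :=
  Set.ncard_le_ncard_of_injOn Subtype.val h (Subtype.val_injective.injOn) (Set.toFinite _)

/-- If `G` has a tree-cut decomposition of thickness at most `α` and crossing number at
most `k`, and `S ⊆ V(G)` satisfies `|S| ≥ α + 1` and `|δ_G(S, V(G)∖S)| ≤ 2α² + 4k`,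
then, with `γ_S(v) = |δ_G({v}, V(G)∖S)|`, the induced graph `G[S]` has a tree-cut
decomposition whose tree is a star with center `t_c` and at least one leaf,
`|X_{t_c}| ≤ α`, `cross(t_c) ≤ k`, every leaf bag `X_q` satisfies
`γ_S(X_q) ≤ α² + 2k` and `|δ_{G[S]}(X_q, X_{t_c})| ≤ α² + k`, and no leaf bag is all
of `S`. -/
theorem stmt_16 {V : Type u} [Fintype V] (G : SimpleGraph V) (α k : ℕ)
    (hα : 0 < α) (hk : 0 < k) (D : TreeCutDecomp G)
    (hthick : D.ThickLE α) (hcross : D.CrossLE k) (S : Set V)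
    (hS : α + 1 ≤ S.ncard)
    (hbd : (edgesBetween G S Sᶜ).ncard ≤ 2 * α ^ 2 + 4 * k) :
    ∃ (D' : TreeCutDecomp (G.induce S)) (tc : D'.β),
      (∃ l : D'.β, l ≠ tc) ∧
      (∀ a b : D'.β, D'.T.Adj a b → a = tc ∨ b = tc) ∧
      (D'.bag tc).ncard ≤ α ∧
      D'.crossNum tc ≤ k ∧
      (∀ q : D'.β, q ≠ tc →
        (∑ v ∈ (Set.toFinite (D'.bag q)).toFinset, {w : V | w ∉ S ∧ G.Adj ↑v w}.ncard)
          ≤ α ^ 2 + 2 * k ∧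
        (edgesBetween (G.induce S) (D'.bag q) (D'.bag tc)).ncard ≤ α ^ 2 + k) ∧
      (∀ q : D'.β, q ≠ tc → D'.bag q ≠ Set.univ) := by
  classical
  letI : Fintype D.β := D.fintypeβ
  have hacyc : D.T.IsAcyclic := D.isTree.IsAcyclic
  have hconn : D.T.Connected := D.isTree.isConnected
  have bag_unique : ∀ {v : V} {b b' : D.β}, v ∈ D.bag b → v ∈ D.bag b' → b = b' := by
    intro v b b' h h'
    by_contra hne
    exact Set.disjoint_left.mp (D.disj hne) h h'
  set gSf : V → ℕ := fun v => {w : V | w ∉ S ∧ G.Adj v w}.ncard with hgSf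
  set Vb : D.β → Finset V := fun b => (D.bag b ∩ S).toFinite.toFinset with hVbdef
  have hVbmem : ∀ b v, v ∈ Vb b ↔ (v ∈ D.bag b ∧ v ∈ S) := by
    intro b v; rw [hVbdef]; simp only [Set.Finite.mem_toFinset]; exact Iff.rfl
  set M : ℕ := S.toFinite.toFinset.card + 1 with hMdef
  set W : D.β → ℕ := fun b => M * (∑ v ∈ Vb b, gSf v) + (Vb b).card with hWdef
  obtain ⟨t, hcent⟩ := TreeAux.exists_centroid D.isTree W
  -- disjointness of the Vb
  have hVbdisj : ∀ b ∈ (Finset.univ : Finset D.β), ∀ b' ∈ (Finset.univ : Finset D.β),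
      b ≠ b' → Disjoint (Vb b) (Vb b') := by
    intro b _ b' _ hne
    rw [Finset.disjoint_left]
    intro v hv hv'
    exact hne (bag_unique ((hVbmem b v).mp hv).1 ((hVbmem b' v).mp hv').1)
  have hcoverF : Finset.univ.biUnion Vb = S.toFinite.toFinset := by
    ext v
    simp only [Finset.mem_biUnion, Finset.mem_univ, true_and, Set.Finite.mem_toFinset]
    constructor
    · rintro ⟨b, hb⟩; exact ((hVbmem b v).mp hb).2
    · intro hv
      obtain ⟨b, hb⟩ := D.covers v
      exact ⟨b, (hVbmem b v).mpr ⟨hb, hv⟩⟩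
  have hGamma : ∑ b, (∑ v ∈ Vb b, gSf v) = ∑ v ∈ S.toFinite.toFinset, gSf v := by
    rw [← hcoverF, Finset.sum_biUnion]
    exact fun b hb b' hb' hne => hVbdisj b hb b' hb' hne
  have hscsum : ∑ b, (Vb b).card = S.toFinite.toFinset.card := by
    rw [← hcoverF, Finset.card_biUnion hVbdisj]
  have hSFcard : S.toFinite.toFinset.card = S.ncard := (Set.ncard_eq_toFinset_card _ _).symm
  have hGle : ∑ v ∈ S.toFinite.toFinset, gSf v ≤ 2 * α ^ 2 + 4 * k :=
    le_trans (sum_gamma_le G S) hbd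
  -- there exists a node other than t
  have hexb : ∃ b : D.β, b ≠ t := by
    by_contra h
    push_neg at h
    have hsub : S ⊆ D.bag t := by
      intro v hv
      obtain ⟨b, hb⟩ := D.covers v
      rwa [h b] at hb
    have := Set.ncard_le_ncard hsub (Set.toFinite _)
    have := hthick t
    omega
  -- the component type
  set L := (D.T.induce {x | x ≠ t}).ConnectedComponent with hLdef
  -- centroid inequalities, reformulated per component
  have hcomp : ∀ c : L, 2 * ∑ b ∈ Finset.univ.filter
      (fun b => ∃ h : b ≠ t, (D.T.induce {x | x ≠ t}).connectedComponentMk ⟨b, h⟩ = c), W b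
      ≤ ∑ b, W b := by
    intro c
    obtain ⟨x, hx⟩ := c.exists_rep
    have h₀ : (↑x : D.β) ≠ t := x.2
    have := hcent ↑x h₀
    have hfeq : Finset.univ.filter
        (fun b => ∃ h : b ≠ t, (D.T.induce {x | x ≠ t}).connectedComponentMk ⟨b, h⟩ = c)
        = Finset.univ.filter
        (fun b => ∃ h : b ≠ t,
          (D.T.induce {x | x ≠ t}).Reachable ⟨b, h⟩ ⟨↑x, h₀⟩) := by
      refine Finset.filter_congr ?_
      intro b _
      constructor
      · rintro ⟨h, hmk⟩
        refine ⟨h, ?_⟩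
        have hxx : (⟨↑x, h₀⟩ : {y : D.β // y ≠ t}) = x := Subtype.ext rfl
        rw [hxx]
        exact SimpleGraph.ConnectedComponent.exact (by rw [hmk, ← hx]; rfl)
      · rintro ⟨h, hre⟩
        refine ⟨h, ?_⟩
        have hxx : (⟨↑x, h₀⟩ : {y : D.β // y ≠ t}) = x := Subtype.ext rfl
        rw [← hx, ← hxx]
        exact SimpleGraph.ConnectedComponent.sound hre
    rw [hfeq]
    exact this
  -- total weight
  have hWtot : ∑ b, W b = M * (∑ v ∈ S.toFinite.toFinset, gSf v) + S.toFinite.toFinset.card := by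
    rw [hWdef]
    rw [Finset.sum_add_distrib, ← Finset.mul_sum, hGamma, hscsum]
  -- per-component bounds
  have hngw : ∀ c : L, ∑ b ∈ Finset.univ.filter
      (fun b => ∃ h : b ≠ t, (D.T.induce {x | x ≠ t}).connectedComponentMk ⟨b, h⟩ = c),
      (∑ v ∈ Vb b, gSf v) ≤ α ^ 2 + 2 * k := by
    intro c
    set F := Finset.univ.filter
      (fun b => ∃ h : b ≠ t, (D.T.induce {x | x ≠ t}).connectedComponentMk ⟨b, h⟩ = c) with hFdef
    have h1 := hcomp c
    have h2 : ∑ b ∈ F, W b = M * (∑ b ∈ F, ∑ v ∈ Vb b, gSf v) + ∑ b ∈ F, (Vb b).card := by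
      rw [hWdef, Finset.sum_add_distrib, ← Finset.mul_sum]
    have hsc_le : ∑ b ∈ F, (Vb b).card ≤ S.toFinite.toFinset.card := by
      rw [← hscsum]
      exact Finset.sum_le_sum_of_subset (Finset.subset_univ F)
    rw [h2, hWtot] at h1
    set g := ∑ b ∈ F, ∑ v ∈ Vb b, gSf v
    set Γ := ∑ v ∈ S.toFinite.toFinset, gSf v
    have h2g : 2 * g ≤ Γ := by
      by_contra hlt
      push_neg at hlt
      have hmul : M * (Γ + 1) ≤ M * (2 * g) := Nat.mul_le_mul_left M hlt
      have hM : S.toFinite.toFinset.card < M := by omega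
      have e1 : M * (Γ + 1) = M * Γ + M := by ring
      have e2 : M * (2 * g) = 2 * (M * g) := by ring
      omega
    omega
  have hnsc : ∀ c : L, ∑ b ∈ Finset.univ.filter
      (fun b => ∃ h : b ≠ t, (D.T.induce {x | x ≠ t}).connectedComponentMk ⟨b, h⟩ = c),
      (Vb b).card < S.toFinite.toFinset.card := by
    intro c
    set F := Finset.univ.filter
      (fun b => ∃ h : b ≠ t, (D.T.induce {x | x ≠ t}).connectedComponentMk ⟨b, h⟩ = c) with hFdef
    have h1 := hcomp c
    have h2 : ∑ b ∈ F, W b = M * (∑ b ∈ F, ∑ v ∈ Vb b, gSf v) + ∑ b ∈ F, (Vb b).card := by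
      rw [hWdef, Finset.sum_add_distrib, ← Finset.mul_sum]
    by_contra hge
    push_neg at hge
    have hsc_le : ∑ b ∈ F, (Vb b).card ≤ S.toFinite.toFinset.card := by
      rw [← hscsum]
      exact Finset.sum_le_sum_of_subset (Finset.subset_univ F)
    have hsceq : ∑ b ∈ F, (Vb b).card = S.toFinite.toFinset.card := le_antisymm hsc_le hge
    -- the complement has no S-vertices, hence no gamma weight
    have hcompl : ∑ b ∈ Finset.univ.filter (fun b => b ∉ F), (Vb b).card = 0 := by
      have := Finset.sum_filter_add_sum_filter_not Finset.univ (fun b => b ∈ F) (fun b => (Vb b).card)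
      have hFF : Finset.univ.filter (fun b => b ∈ F) = F := by
        simp [Finset.filter_mem_eq_inter]
      rw [hFF] at this
      omega
    have hgcompl : ∑ b ∈ Finset.univ.filter (fun b => b ∉ F), (∑ v ∈ Vb b, gSf v) = 0 := by
      refine Finset.sum_eq_zero ?_
      intro b hb
      have hcard0 : (Vb b).card = 0 := by
        have := (Finset.sum_eq_zero_iff).mp hcompl b hb
        exact this
      rw [Finset.card_eq_zero.mp hcard0]
      simp
    have hgeq : ∑ b ∈ F, (∑ v ∈ Vb b, gSf v) = ∑ v ∈ S.toFinite.toFinset, gSf v := by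
      rw [← hGamma]
      have := Finset.sum_filter_add_sum_filter_not Finset.univ (fun b => b ∈ F)
        (fun b => ∑ v ∈ Vb b, gSf v)
      have hFF : Finset.univ.filter (fun b => b ∈ F) = F := by
        simp [Finset.filter_mem_eq_inter]
      rw [hFF] at this
      omega
    rw [h2, hWtot, hgeq, hsceq] at h1
    have hScard_pos : 0 < S.toFinite.toFinset.card := by
      rw [hSFcard]; omega
    omega
    -- the bags of the new decomposition
  let bagC : Option L → Set ↥S := fun o =>
    match o with
    | none => {v : ↥S | ↑v ∈ D.bag t}
    | some c => {v : ↥S | ∃ b, ↑v ∈ D.bag b ∧ ∃ h : b ≠ t,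
        (D.T.induce {x | x ≠ t}).connectedComponentMk ⟨b, h⟩ = c}
  have hdisjC : Pairwise fun s' t' => Disjoint (bagC s') (bagC t') := by
    intro o o' hne
    rw [Set.disjoint_left]
    intro v hv hv'
    rcases o with _ | c <;> rcases o' with _ | c'
    · exact hne rfl
    · obtain ⟨b, hb, h, -⟩ := hv'
      exact h (bag_unique hb hv)
    · obtain ⟨b, hb, h, -⟩ := hv
      exact h (bag_unique hb hv')
    · obtain ⟨b, hb, h, hmk⟩ := hv
      obtain ⟨b', hb', h', hmk'⟩ := hv'
      have hbb : b = b' := bag_unique hb hb'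
      subst hbb
      refine hne ?_
      have : (⟨b, h⟩ : {y : D.β // y ≠ t}) = ⟨b, h'⟩ := rfl
      rw [← hmk, ← hmk', this]
  have hcovC : ∀ v : ↥S, ∃ o, v ∈ bagC o := by
    intro v
    obtain ⟨b, hb⟩ := D.covers ↑v
    by_cases hbt : b = t
    · subst hbt; exact ⟨none, hb⟩
    · exact ⟨some ((D.T.induce {x | x ≠ t}).connectedComponentMk ⟨b, hbt⟩),
        b, hb, hbt, rfl⟩
  haveI : Finite L := by rw [hLdef]; exact Quot.finite _
  refine ⟨⟨Option L, Fintype.ofFinite _, _root_.starGraph L, _root_.starGraph.isTree, bagC, hdisjC, hcovC⟩,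
    none, ?_, ?_, ?_, ?_, ?_, ?_⟩
  · -- at least one leaf
    obtain ⟨b₁, hb₁⟩ := hexb
    exact ⟨some ((D.T.induce {x | x ≠ t}).connectedComponentMk ⟨b₁, hb₁⟩),
      Option.some_ne_none _⟩
  · -- star shape
    intro a b hadj
    exact hadj.2
  · -- centre bag is small
    exact le_trans (ncard_coe_le _ _ (fun v hv => hv)) (hthick t)
  · -- crossing number of the centre
    refine le_trans (le_trans (Set.ncard_le_ncard_of_injOn (Sym2.map Subtype.val) ?_
      ((Sym2.map.injective Subtype.val_injective).injOn) (Set.toFinite _)) le_rfl) (hcross t)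
    rintro e ⟨hedge, u, v, s₁, s₂, h₁, h₂, heq, hu, hv, hnr⟩
    rcases s₁ with _ | c₁
    · exact absurd rfl h₁
    rcases s₂ with _ | c₂
    · exact absurd rfl h₂
    obtain ⟨b₁, hb₁, hb₁t, hmk₁⟩ := hu
    obtain ⟨b₂, hb₂, hb₂t, hmk₂⟩ := hv
    have hc : c₁ ≠ c₂ := by
      intro hcc
      subst hcc
      exact hnr (SimpleGraph.Reachable.refl _)
    have hadjuv : G.Adj ↑u ↑v := by
      have : (G.induce S).Adj u v := (G.induce S).mem_edgeSet.mp (by rw [← heq]; exact hedge)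
      simpa using this
    refine ⟨?_, ↑u, ↑v, b₁, b₂, hb₁t, hb₂t, ?_, hb₁, hb₂, ?_⟩
    · rw [heq, Sym2.map_pair_eq]
      exact G.mem_edgeSet.mpr hadjuv
    · rw [heq, Sym2.map_pair_eq]
    · intro hre
      refine hc ?_
      rw [← hmk₁, ← hmk₂]
      exact SimpleGraph.ConnectedComponent.sound hre
  · -- the two leaf bounds
    intro q hq
    rcases q with _ | c
    · exact absurd rfl hq
    constructor
    · -- gamma bound
      show (∑ v ∈ (Set.toFinite (bagC (some c))).toFinset, gSf ↑v) ≤ α ^ 2 + 2 * k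
      have hsum : ∑ v ∈ (Set.toFinite (bagC (some c))).toFinset, gSf ↑v
          = ∑ b ∈ Finset.univ.filter (fun b => ∃ h : b ≠ t,
              (D.T.induce {x | x ≠ t}).connectedComponentMk ⟨b, h⟩ = c), ∑ v ∈ Vb b, gSf v := by
        have hsum2 : ∑ x ∈ (Finset.univ.filter (fun b => ∃ h : b ≠ t,
              (D.T.induce {x | x ≠ t}).connectedComponentMk ⟨b, h⟩ = c)).biUnion Vb, gSf x
            = ∑ b ∈ Finset.univ.filter (fun b => ∃ h : b ≠ t,
              (D.T.induce {x | x ≠ t}).connectedComponentMk ⟨b, h⟩ = c), ∑ v ∈ Vb b, gSf v :=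
          Finset.sum_biUnion (fun b _ b' _ hne =>
            hVbdisj b (Finset.mem_univ b) b' (Finset.mem_univ b') hne)
        rw [← hsum2]
        refine Finset.sum_bij (fun (v : ↥S) (_ : v ∈ (Set.toFinite (bagC (some c))).toFinset)
          => (↑v : V)) ?_ ?_ ?_ ?_
        · intro v hv
          rw [Set.Finite.mem_toFinset] at hv
          obtain ⟨b, hb, hbt, hmk⟩ := hv
          refine Finset.mem_biUnion.mpr ⟨b, ?_, (hVbmem b ↑v).mpr ⟨hb, v.2⟩⟩
          exact Finset.mem_filter.mpr ⟨Finset.mem_univ _, hbt, hmk⟩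
        · intro v hv v' hv' hvv
          exact Subtype.ext hvv
        · intro w hw
          obtain ⟨b, hbF, hwb⟩ := Finset.mem_biUnion.mp hw
          obtain ⟨hwbag, hwS⟩ := (hVbmem b w).mp hwb
          obtain ⟨-, hbt, hmk⟩ := Finset.mem_filter.mp hbF
          refine ⟨⟨w, hwS⟩, ?_, rfl⟩
          rw [Set.Finite.mem_toFinset]
          exact ⟨b, hwbag, hbt, hmk⟩
        · intro v hv
          rfl
      rw [hsum]
      exact hngw c
    · -- edges to the centre bag
      obtain ⟨x, hx⟩ := c.exists_rep
      obtain ⟨r, hrt, p₀, hp₀⟩ := TreeAux.exists_escape hconn x.2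
      have cert : ∀ b (hb : b ≠ t),
          (D.T.induce {x | x ≠ t}).connectedComponentMk ⟨b, hb⟩ = c →
          ∃ p : D.T.Walk b r, t ∉ p.support := by
        intro b hb hmk
        have hre : (D.T.induce {x | x ≠ t}).Reachable ⟨b, hb⟩ x :=
          SimpleGraph.ConnectedComponent.exact (by rw [hmk, ← hx]; rfl)
        obtain ⟨w, hw⟩ := TreeAux.walk_avoid_of_reachable_induce hre
        refine ⟨w.append p₀, ?_⟩
        intro hmem
        rcases (SimpleGraph.Walk.mem_support_append_iff _ _).mp hmem with h' | h'
        · exact (hw t h') rfl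
        · exact hp₀ h'
      have hnotreach : ∀ b (hb : b ≠ t),
          (D.T.induce {x | x ≠ t}).connectedComponentMk ⟨b, hb⟩ = c →
          ∀ (hbr : b ≠ r) (htr : t ≠ r),
          ¬ (D.T.induce {x | x ≠ r}).Reachable ⟨b, hbr⟩ ⟨t, htr⟩ := by
        intro b hb hmk hbr htr hre
        obtain ⟨w, hw⟩ := TreeAux.walk_avoid_of_reachable_induce hre
        exact (hw r (TreeAux.mem_support_of_walk_to_center hacyc hb hrt
          (cert b hb hmk) w)) rfl
      -- covering by two sets
      set E1 : Set (Sym2 ↥S) := (fun p : ↥S × ↥S => s(p.1, p.2)) ''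
        (({u : ↥S | ↑u ∈ D.bag r} ×ˢ {v : ↥S | ↑v ∈ D.bag t}) : Set (↥S × ↥S)) with hE1
      set E2 : Set (Sym2 ↥S) := {e : Sym2 ↥S | D.Crosses r (Sym2.map Subtype.val e)} with hE2
      have hsubE : edgesBetween (G.induce S) (bagC (some c)) (bagC none) ⊆ E1 ∪ E2 := by
        rintro e ⟨hedge, u, hu, v, hv, heq⟩
        obtain ⟨b, hb, hbt, hmk⟩ := hu
        have hadjuv : G.Adj ↑u ↑v := by
          have : (G.induce S).Adj u v := (G.induce S).mem_edgeSet.mp (by rw [← heq]; exact hedge)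
          simpa using this
        by_cases hbr : b = r
        · subst hbr
          exact Or.inl ⟨(u, v), ⟨hb, hv⟩, heq.symm⟩
        · refine Or.inr ?_
          rw [hE2]
          refine ⟨?_, ↑u, ↑v, b, t, hbr, hrt.ne', ?_, hb, hv, ?_⟩
          · rw [heq, Sym2.map_pair_eq]
            exact G.mem_edgeSet.mpr hadjuv
          · rw [heq, Sym2.map_pair_eq]
          · exact hnotreach b hbt hmk hbr hrt.ne'
      refine le_trans (Set.ncard_le_ncard hsubE (Set.toFinite _)) ?_
      refine le_trans (Set.ncard_union_le _ _) ?_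
      have hE1le : E1.ncard ≤ α ^ 2 := by
        refine le_trans (Set.ncard_image_le (Set.toFinite _)) ?_
        letI : Fintype ↥S := S.toFinite.fintype
        rw [ncard_prod_eq]
        have h1 : ({u : ↥S | ↑u ∈ D.bag r}).ncard ≤ α :=
          le_trans (ncard_coe_le _ _ (fun v hv => hv)) (hthick r)
        have h2 : ({v : ↥S | ↑v ∈ D.bag t}).ncard ≤ α :=
          le_trans (ncard_coe_le _ _ (fun v hv => hv)) (hthick t)
        calc ({u : ↥S | ↑u ∈ D.bag r}).ncard * ({v : ↥S | ↑v ∈ D.bag t}).ncard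
            ≤ α * α := Nat.mul_le_mul h1 h2
          _ = α ^ 2 := by ring
      have hE2le : E2.ncard ≤ k := by
        refine le_trans (Set.ncard_le_ncard_of_injOn (Sym2.map Subtype.val)
          (fun e he => he) ((Sym2.map.injective Subtype.val_injective).injOn)
          (Set.toFinite _)) (hcross r)
      omega
  · -- no leaf bag is everything
    intro q hq
    rcases q with _ | c
    · exact absurd rfl hq
    intro huniv
    have hsub : S.toFinite.toFinset ⊆ (Finset.univ.filter (fun b => ∃ h : b ≠ t,
        (D.T.induce {x | x ≠ t}).connectedComponentMk ⟨b, h⟩ = c)).biUnion Vb := by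
      intro w hw
      rw [Set.Finite.mem_toFinset] at hw
      have hv : (⟨w, hw⟩ : ↥S) ∈ bagC (some c) := by
        have hmem := Set.mem_univ (⟨w, hw⟩ : ↥S)
        rw [← huniv] at hmem
        exact hmem
      obtain ⟨b, hbag, hbt, hmk⟩ := hv
      refine Finset.mem_biUnion.mpr ⟨b, ?_, (hVbmem b w).mpr ⟨hbag, hw⟩⟩
      exact Finset.mem_filter.mpr ⟨Finset.mem_univ _, hbt, hmk⟩
    have hcard := Finset.card_le_card hsub
    rw [Finset.card_biUnion (fun b _ b' _ hne =>
      hVbdisj b (Finset.mem_univ b) b' (Finset.mem_univ b') hne)] at hcard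
    exact absurd hcard (Nat.not_le.mpr (hnsc c))
end
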